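/- arXiv:1604.05755 — 3 statements merged into one kernel-verified Lean document; each statement's English description precedes it below -/
import Mathlib

section
/- Let g ∈ G_n, h ∈ G_k and let λ be a partial bijection from {0,…,k−1} to {0,…,n−1} with rk λ = d. If (s,t) and (s′,t′) are two realizations of λ, then the elements (s g s⁻¹)(t h t⁻¹) and (s′ g s′⁻¹)(t′ h t′⁻¹) both lie in G_{n+k−d} and are K_{n+k−d}-conjugate; that is, the K_{n+k−d}-conjugacy class of g ⊛_λ h does not depend on the choice of realization. -/
noncomputable section

/-- Embedding of permutations of `ℕ` into permutations of `V = X ⊕ (I × ℕ)`,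
acting trivially on `X` and on the first factor of `I × ℕ`.  It restricts to an
embedding of `S_∞` into `S(V)`. -/
def embNat (I X : Type*) (τ : Equiv.Perm ℕ) : Equiv.Perm (X ⊕ I × ℕ) :=
  Equiv.sumCongr (Equiv.refl X) (Equiv.prodCongr (Equiv.refl I) τ)

/-- `τ` fixes every `m ≥ n`, i.e. `τ` belongs to the subgroup `S_n ≤ S_∞`. -/
def fixesFrom (n : ℕ) (τ : Equiv.Perm ℕ) : Prop := ∀ m : ℕ, n ≤ m → τ m = m

/-- `G_n`: the set of elements of `G_∞` fixing every point of `V ∖ V_n`. -/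
def Gset {I X : Type*} (Ginf : Subgroup (Equiv.Perm (X ⊕ I × ℕ))) (n : ℕ) :
    Set (Equiv.Perm (X ⊕ I × ℕ)) :=
  {g | g ∈ Ginf ∧ ∀ (i : I) (m : ℕ), n ≤ m → g (Sum.inr (i, m)) = Sum.inr (i, m)}

/-- `K_n`-conjugacy of elements of `S(V)`:  `g' = κ g κ⁻¹` for some `κ ∈ K_n`,
where `K_n` is the image of `S_n` in `S(V)`. -/
def Kconj {I X : Type*} (n : ℕ) (g g' : Equiv.Perm (X ⊕ I × ℕ)) : Prop :=
  ∃ τ : Equiv.Perm ℕ, fixesFrom n τ ∧ g' = embNat I X τ * g * (embNat I X τ)⁻¹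

/-- A permutation of `Fin N` extended to `ℕ` and then to `V`; these elements
form exactly the subgroup `K_N ≤ S(V)`. -/
def embFin (I X : Type*) (N : ℕ) (σ : Equiv.Perm (Fin N)) : Equiv.Perm (X ⊕ I × ℕ) :=
  embNat I X (σ.extendDomain Fin.equivSubtype)

/-- The element `A_N[j,g] = (1/(N−j)!) Σ_{τ ∈ K_N} τ g τ⁻¹` of `ℂ[G_∞]`
(and `A_N[j,g] = 0` for `j > N`). -/
def AN (I X : Type*) (N j : ℕ) (g : Equiv.Perm (X ⊕ I × ℕ)) :
    MonoidAlgebra ℂ (Equiv.Perm (X ⊕ I × ℕ)) :=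
  if j ≤ N then
    ((Nat.factorial (N - j) : ℂ))⁻¹ •
      ∑ σ : Equiv.Perm (Fin N),
        MonoidAlgebra.of ℂ (Equiv.Perm (X ⊕ I × ℕ))
          (embFin I X N σ * g * (embFin I X N σ)⁻¹)
  else 0


/-- A partial bijection from `{0,…,k−1}` to `{0,…,n−1}`, encoded as a function
`Fin k → Option (Fin n)` (so each point of the domain has at most one image) which is
injective where defined. -/
def PB (k n : ℕ) : Type :=
  {f : Fin k → Option (Fin n) // ∀ (i i' : Fin k) (j : Fin n),
    f i = some j → f i' = some j → i = i'}

/-- The rank of a partial bijection: the cardinality of its domain. -/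
def PB.rank {k n : ℕ} (L : PB k n) : ℕ :=
  (Finset.univ.filter fun i => (L.val i).isSome).card

/-- A realization of a partial bijection `λ` from `{0,…,k−1}` to `{0,…,n−1}` of rank `d`:
a pair `(σs, σt)` of permutations of `ℕ` belonging to `S_{n+k−d}` (i.e. elements of
`K_{n+k−d}` in terms of their images in `S(V)`), restricting to injections of `{0,…,n−1}`
resp. `{0,…,k−1}` into `{0,…,n+k−d−1}`, and satisfying `σt(i) = σs(j) ↔ λ(i) = j`. -/
def IsRealization (n k : ℕ) (L : PB k n) (σs σt : Equiv.Perm ℕ) : Prop :=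
  fixesFrom (n + k - L.rank) σs ∧ fixesFrom (n + k - L.rank) σt ∧
    (∀ j : Fin n, σs (j : ℕ) < n + k - L.rank) ∧
    (∀ i : Fin k, σt (i : ℕ) < n + k - L.rank) ∧
    (∀ (i : Fin k) (j : Fin n), σt (i : ℕ) = σs (j : ℕ) ↔ L.val i = some j)

section Helpers

variable {I X : Type*}

@[simp] lemma embNat_apply_inl (τ : Equiv.Perm ℕ) (x : X) :
    embNat I X τ (Sum.inl x) = Sum.inl x := rfl

@[simp] lemma embNat_apply_inr (τ : Equiv.Perm ℕ) (i : I) (m : ℕ) :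
    embNat I X τ (Sum.inr (i, m)) = Sum.inr (i, τ m) := rfl

lemma embNat_mul (a b : Equiv.Perm ℕ) :
    embNat I X (a * b) = embNat I X a * embNat I X b := by
  ext v
  rcases v with x | ⟨i, m⟩ <;> rfl

lemma embNat_inv (a : Equiv.Perm ℕ) :
    embNat I X a⁻¹ = (embNat I X a)⁻¹ := by
  have h : embNat I X a⁻¹ * embNat I X a = 1 := by
    rw [← embNat_mul, inv_mul_cancel]
    ext v
    rcases v with x | ⟨i, m⟩ <;> rfl
  exact eq_inv_of_mul_eq_one_left h

lemma fixesFrom_inv (N : ℕ) (τ : Equiv.Perm ℕ) (hτ : fixesFrom N τ) :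
    fixesFrom N τ⁻¹ := by
  intro m hm
  have := hτ m hm
  conv_lhs => rw [← this]
  exact τ.symm_apply_apply m

/-- An element of `S(V)` conjugating commutes with every `g ∈ G_n` as soon as the
underlying permutation of `ℕ` fixes `{0,…,n−1}` pointwise. -/
lemma embNat_comm (g : Equiv.Perm (X ⊕ I × ℕ)) (n : ℕ)
    (hg : ∀ (i : I) (m : ℕ), n ≤ m → g (Sum.inr (i, m)) = Sum.inr (i, m))
    (u : Equiv.Perm ℕ) (hu : ∀ m, m < n → u m = m) :
    embNat I X u * g = g * embNat I X u := by
  have hun : ∀ m, n ≤ m → n ≤ u m := by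
    intro m hm
    by_contra hlt
    push_neg at hlt
    have h1 := hu (u m) hlt
    have h2 := u.injective h1
    omega
  have hsmall : ∀ v : X ⊕ I × ℕ, embNat I X u v = v →
      embNat I X u (g v) = g v := by
    intro v hv
    rcases hgv : g v with x | ⟨i', m'⟩
    · rfl
    · by_cases hm' : m' < n
      · rw [embNat_apply_inr, hu m' hm']
      · push_neg at hm'
        have hveq : v = Sum.inr (i', m') := g.injective (hgv.trans (hg i' m' hm').symm)
        rw [hveq] at hv
        exact hv
  ext v
  simp only [Equiv.Perm.mul_apply]
  rcases v with x | ⟨i, m⟩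
  · rw [embNat_apply_inl]
    exact hsmall (Sum.inl x) rfl
  · by_cases hm : m < n
    · have h1 : embNat I X u (Sum.inr (i, m)) = Sum.inr (i, m) := by
        rw [embNat_apply_inr, hu m hm]
      rw [h1]
      exact hsmall _ h1
    · push_neg at hm
      rw [hg i m hm, embNat_apply_inr, hg i (u m) (hun m hm)]

lemma Gset_mul (Ginf : Subgroup (Equiv.Perm (X ⊕ I × ℕ))) (N : ℕ)
    {a b : Equiv.Perm (X ⊕ I × ℕ)} (ha : a ∈ Gset Ginf N) (hb : b ∈ Gset Ginf N) :
    a * b ∈ Gset Ginf N :=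
  ⟨mul_mem ha.1 hb.1, fun i m hm => by
    rw [Equiv.Perm.mul_apply, hb.2 i m hm, ha.2 i m hm]⟩

lemma conj_mem (Ginf : Subgroup (Equiv.Perm (X ⊕ I × ℕ)))
    (hGS : ∀ τ : Equiv.Perm ℕ, {m : ℕ | τ m ≠ m}.Finite → embNat I X τ ∈ Ginf)
    (n N : ℕ) (hnN : n ≤ N) (g : Equiv.Perm (X ⊕ I × ℕ)) (hg : g ∈ Gset Ginf n)
    (τ : Equiv.Perm ℕ) (hτ : fixesFrom N τ) :
    embNat I X τ * g * (embNat I X τ)⁻¹ ∈ Gset Ginf N := by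
  have hmem : embNat I X τ ∈ Ginf := by
    apply hGS τ
    apply Set.Finite.subset (Set.finite_Iio N)
    intro m hm
    simp only [Set.mem_setOf_eq] at hm
    simp only [Set.mem_Iio]
    by_contra hge
    push_neg at hge
    exact hm (hτ m hge)
  refine ⟨mul_mem (mul_mem hmem hg.1) (inv_mem hmem), ?_⟩
  intro i m hm
  have h1 : (embNat I X τ)⁻¹ (Sum.inr (i, m)) = Sum.inr (i, m) := by
    rw [← embNat_inv, embNat_apply_inr, fixesFrom_inv N τ hτ m hm]
  rw [Equiv.Perm.mul_apply, Equiv.Perm.mul_apply, h1, hg.2 i m (le_trans hnN hm),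
    embNat_apply_inr, hτ m hm]

end Helpers

lemma PB.rank_le_right {k n : ℕ} (L : PB k n) : L.rank ≤ k :=
  le_trans (Finset.card_filter_le _ _) (by simp)

lemma PB.rank_le_left {k n : ℕ} (L : PB k n) : L.rank ≤ n := by
  classical
  have hle : L.rank ≤ (Finset.image some (Finset.univ : Finset (Fin n))).card := by
    apply Finset.card_le_card_of_injOn (fun i => L.val i)
    · intro i hi
      rw [Finset.mem_coe, Finset.mem_filter] at hi
      obtain ⟨j, hj⟩ := Option.isSome_iff_exists.mp hi.2
      show L.val i ∈ (Finset.image some Finset.univ : Finset (Option (Fin n)))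
      rw [hj]
      exact Finset.mem_image_of_mem _ (Finset.mem_univ j)
    · intro a ha b hb hab
      simp only [Finset.coe_filter, Set.mem_setOf_eq] at ha
      obtain ⟨j, hj⟩ := Option.isSome_iff_exists.mp ha.2
      have hab' : L.val a = L.val b := hab
      exact L.property a b j hj (hab' ▸ hj)
  calc L.rank ≤ _ := hle
    _ = n := by
      rw [Finset.card_image_of_injective _ (Option.some_injective _), Finset.card_univ,
        Fintype.card_fin]
/-- The correcting permutation sending the realization `(σs, σt)` of `λ` to the
realization `(σs', σt')`: it maps `σs j ↦ σs' j` and `σt i ↦ σt' i` and is the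
identity elsewhere. -/
def kf (n k : ℕ) (σs σt σs' σt' : Equiv.Perm ℕ) (m : ℕ) : ℕ :=
  if h : ∃ j : Fin n, σs (j : ℕ) = m then σs' ((h.choose : Fin n) : ℕ)
  else if h' : ∃ i : Fin k, σt (i : ℕ) = m then σt' ((h'.choose : Fin k) : ℕ)
  else m

lemma kf_spec_s (n k : ℕ) (σs σt σs' σt' : Equiv.Perm ℕ) (m : ℕ)
    (h : ∃ j : Fin n, σs (j : ℕ) = m) (j : Fin n) (hj : σs (j : ℕ) = m) :
    kf n k σs σt σs' σt' m = σs' (j : ℕ) := by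
  unfold kf
  rw [dif_pos h]
  exact congrArg σs' (σs.injective (h.choose_spec.trans hj.symm))

lemma kf_spec_t (n k : ℕ) (σs σt σs' σt' : Equiv.Perm ℕ) (m : ℕ)
    (hns : ¬ ∃ j : Fin n, σs (j : ℕ) = m) (i : Fin k) (hi : σt (i : ℕ) = m) :
    kf n k σs σt σs' σt' m = σt' (i : ℕ) := by
  unfold kf
  rw [dif_neg hns, dif_pos ⟨i, hi⟩]
  exact congrArg σt' (σt.injective ((Exists.choose_spec (⟨i, hi⟩ :
    ∃ i' : Fin k, σt (i' : ℕ) = m)).trans hi.symm))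

lemma kf_none (n k : ℕ) (σs σt σs' σt' : Equiv.Perm ℕ) (m : ℕ)
    (hns : ¬ ∃ j : Fin n, σs (j : ℕ) = m) (hnt : ¬ ∃ i : Fin k, σt (i : ℕ) = m) :
    kf n k σs σt σs' σt' m = m := by
  unfold kf
  rw [dif_neg hns, dif_neg hnt]

lemma kf_fix (n k N : ℕ) (σs σt σs' σt' : Equiv.Perm ℕ)
    (hbs : ∀ j : Fin n, σs (j : ℕ) < N) (hbt : ∀ i : Fin k, σt (i : ℕ) < N)
    (m : ℕ) (hm : N ≤ m) : kf n k σs σt σs' σt' m = m := by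
  apply kf_none
  · rintro ⟨j, hj⟩; have := hbs j; omega
  · rintro ⟨i, hi⟩; have := hbt i; omega

lemma kf_apply_t (n k : ℕ) (L : PB k n) (σs σt σs' σt' : Equiv.Perm ℕ)
    (hl1 : ∀ (i : Fin k) (j : Fin n), σt (i : ℕ) = σs (j : ℕ) ↔ L.val i = some j)
    (hl2 : ∀ (i : Fin k) (j : Fin n), σt' (i : ℕ) = σs' (j : ℕ) ↔ L.val i = some j)
    (i : Fin k) : kf n k σs σt σs' σt' (σt (i : ℕ)) = σt' (i : ℕ) := by
  by_cases h : ∃ j : Fin n, σs (j : ℕ) = σt (i : ℕ)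
  · obtain ⟨j, hj⟩ := h
    rw [kf_spec_s n k σs σt σs' σt' _ ⟨j, hj⟩ j hj]
    exact ((hl2 i j).mpr ((hl1 i j).mp hj.symm)).symm
  · exact kf_spec_t n k σs σt σs' σt' _ h i rfl

/-- The images of `{0,…,n−1}` under `σs` and of `{0,…,k−1}` under `σt` cover all of
`{0,…,n+k−d−1}` (counting argument). -/
lemma realization_surj (n k : ℕ) (L : PB k n) (σs σt : Equiv.Perm ℕ)
    (h : IsRealization n k L σs σt) :
    ∀ m, m < n + k - L.rank →
      (∃ j : Fin n, σs (j : ℕ) = m) ∨ (∃ i : Fin k, σt (i : ℕ) = m) := by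
  classical
  obtain ⟨-, -, hbs, hbt, hl⟩ := h
  set S : Finset ℕ := Finset.image (fun j : Fin n => σs (j : ℕ)) Finset.univ with hS
  set T : Finset ℕ := Finset.image (fun i : Fin k => σt (i : ℕ)) Finset.univ with hT
  have hinjs : Function.Injective (fun j : Fin n => σs (j : ℕ)) :=
    fun a b hab => Fin.val_injective (σs.injective hab)
  have hinjt : Function.Injective (fun i : Fin k => σt (i : ℕ)) :=
    fun a b hab => Fin.val_injective (σt.injective hab)
  have hcS : S.card = n := by
    rw [hS, Finset.card_image_of_injective _ hinjs, Finset.card_univ, Fintype.card_fin]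
  have hcT : T.card = k := by
    rw [hT, Finset.card_image_of_injective _ hinjt, Finset.card_univ, Fintype.card_fin]
  have hinter : S ∩ T = Finset.image (fun i : Fin k => σt (i : ℕ))
      (Finset.univ.filter fun i => (L.val i).isSome) := by
    ext m
    simp only [Finset.mem_inter, Finset.mem_image, Finset.mem_filter, Finset.mem_univ,
      true_and, hS, hT]
    constructor
    · rintro ⟨⟨j, hj⟩, ⟨i, hi⟩⟩
      refine ⟨i, ?_, hi⟩
      have heq : σt (i : ℕ) = σs (j : ℕ) := by rw [hi, hj]
      rw [(hl i j).mp heq]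
      rfl
    · rintro ⟨i, hsome, hi⟩
      obtain ⟨j, hj⟩ := Option.isSome_iff_exists.mp hsome
      have heq : σt (i : ℕ) = σs (j : ℕ) := (hl i j).mpr hj
      exact ⟨⟨j, by rw [← heq, hi]⟩, ⟨i, hi⟩⟩
  have hcI : (S ∩ T).card = L.rank := by
    rw [hinter, Finset.card_image_of_injective _ hinjt]
    rfl
  have hrk : L.rank ≤ k := PB.rank_le_right L
  have hcU : (S ∪ T).card = n + k - L.rank := by
    have h2 := Finset.card_union_add_card_inter S T
    omega
  have hUsub : S ∪ T ⊆ Finset.range (n + k - L.rank) := by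
    intro m hm
    rw [Finset.mem_range]
    rcases Finset.mem_union.mp hm with hm | hm
    · obtain ⟨j, -, hj⟩ := Finset.mem_image.mp hm
      rw [← hj]; exact hbs j
    · obtain ⟨i, -, hi⟩ := Finset.mem_image.mp hm
      rw [← hi]; exact hbt i
  have hEq : S ∪ T = Finset.range (n + k - L.rank) :=
    Finset.eq_of_subset_of_card_le hUsub (by rw [hcU, Finset.card_range])
  intro m hm
  have hmem : m ∈ S ∪ T := by rw [hEq]; exact Finset.mem_range.mpr hm
  rcases Finset.mem_union.mp hmem with hm' | hm'
  · obtain ⟨j, -, hj⟩ := Finset.mem_image.mp hm'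
    exact Or.inl ⟨j, hj⟩
  · obtain ⟨i, -, hi⟩ := Finset.mem_image.mp hm'
    exact Or.inr ⟨i, hi⟩

lemma kf_comp (n k : ℕ) (L : PB k n) (σs σt σs' σt' : Equiv.Perm ℕ)
    (h1 : IsRealization n k L σs σt) (h2 : IsRealization n k L σs' σt') :
    ∀ m, kf n k σs' σt' σs σt (kf n k σs σt σs' σt' m) = m := by
  intro m
  obtain ⟨hf1s, hf1t, hbs1, hbt1, hl1⟩ := h1
  obtain ⟨-, -, hbs2, hbt2, hl2⟩ := h2
  by_cases hj : ∃ j : Fin n, σs (j : ℕ) = m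
  · obtain ⟨j, hjm⟩ := hj
    rw [kf_spec_s n k σs σt σs' σt' m ⟨j, hjm⟩ j hjm,
      kf_spec_s n k σs' σt' σs σt _ ⟨j, rfl⟩ j rfl]
    exact hjm
  · by_cases hi : ∃ i : Fin k, σt (i : ℕ) = m
    · obtain ⟨i, him⟩ := hi
      rw [kf_spec_t n k σs σt σs' σt' m hj i him]
      have hns' : ¬ ∃ j : Fin n, σs' (j : ℕ) = σt' (i : ℕ) := by
        rintro ⟨j, hjeq⟩
        exact hj ⟨j, ((hl1 i j).mpr ((hl2 i j).mp hjeq.symm)).symm.trans him⟩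
      rw [kf_spec_t n k σs' σt' σs σt _ hns' i rfl]
      exact him
    · have hm : n + k - L.rank ≤ m := by
        by_contra hlt
        push_neg at hlt
        rcases realization_surj n k L σs σt ⟨hf1s, hf1t, hbs1, hbt1, hl1⟩ m hlt with
          hc | hc
        · exact hj hc
        · exact hi hc
      rw [kf_none n k σs σt σs' σt' m hj hi]
      apply kf_none
      · rintro ⟨j, hje⟩; have := hbs2 j; omega
      · rintro ⟨i, hie⟩; have := hbt2 i; omega

/-- For `g ∈ G_n`, `h ∈ G_k` and a partial bijection `λ` from `{0,…,k−1}` to `{0,…,n−1}`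
of rank `d`, and any two realizations `(s,t)`, `(s′,t′)` of `λ`, the elements
`(s g s⁻¹)(t h t⁻¹)` and `(s′ g s′⁻¹)(t′ h t′⁻¹)` both lie in `G_{n+k−d}` and are
`K_{n+k−d}`-conjugate:  the `K_{n+k−d}`-conjugacy class of `g ⊛_λ h` does not depend on
the choice of realization. -/
theorem circledAst_welldefined
    {I X : Type*} [Finite I] [Countable X]
    (Ginf : Subgroup (Equiv.Perm (X ⊕ I × ℕ)))
    (hGfs : ∀ g ∈ Ginf, {v : X ⊕ I × ℕ | g v ≠ v}.Finite)
    (hGS : ∀ τ : Equiv.Perm ℕ, {m : ℕ | τ m ≠ m}.Finite → embNat I X τ ∈ Ginf)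
    (n k : ℕ) (g h : Equiv.Perm (X ⊕ I × ℕ))
    (hg : g ∈ Gset Ginf n) (hh : h ∈ Gset Ginf k)
    (L : PB k n) (σs σt σs' σt' : Equiv.Perm ℕ)
    (h1 : IsRealization n k L σs σt) (h2 : IsRealization n k L σs' σt') :
    (embNat I X σs * g * (embNat I X σs)⁻¹) * (embNat I X σt * h * (embNat I X σt)⁻¹)
        ∈ Gset Ginf (n + k - L.rank) ∧
    (embNat I X σs' * g * (embNat I X σs')⁻¹) * (embNat I X σt' * h * (embNat I X σt')⁻¹)
        ∈ Gset Ginf (n + k - L.rank) ∧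
    Kconj (n + k - L.rank)
      ((embNat I X σs * g * (embNat I X σs)⁻¹) * (embNat I X σt * h * (embNat I X σt)⁻¹))
      ((embNat I X σs' * g * (embNat I X σs')⁻¹) *
        (embNat I X σt' * h * (embNat I X σt')⁻¹)) := by

  classical
  have hrk : L.rank ≤ k := PB.rank_le_right L
  have hrn : L.rank ≤ n := PB.rank_le_left L
  have hnN : n ≤ n + k - L.rank := by omega
  have hkN : k ≤ n + k - L.rank := by omega
  refine ⟨Gset_mul Ginf _ (conj_mem Ginf hGS n _ hnN g hg σs h1.1)
      (conj_mem Ginf hGS k _ hkN h hh σt h1.2.1),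
    Gset_mul Ginf _ (conj_mem Ginf hGS n _ hnN g hg σs' h2.1)
      (conj_mem Ginf hGS k _ hkN h hh σt' h2.2.1), ?_⟩
  -- the correcting permutation κ
  refine ⟨⟨kf n k σs σt σs' σt', kf n k σs' σt' σs σt,
      kf_comp n k L σs σt σs' σt' h1 h2, kf_comp n k L σs' σt' σs σt h2 h1⟩, ?_, ?_⟩
  · intro m hm
    exact kf_fix n k _ σs σt σs' σt' h1.2.2.1 h1.2.2.2.1 m hm
  · set κ : Equiv.Perm ℕ := ⟨kf n k σs σt σs' σt', kf n k σs' σt' σs σt,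
      kf_comp n k L σs σt σs' σt' h1 h2, kf_comp n k L σs' σt' σs σt h2 h1⟩ with hκ
    have hκ_app : ∀ m, κ m = kf n k σs σt σs' σt' m := fun m => rfl
    -- κ ∘ σs = σs' on {0,…,n−1}
    have hus : ∀ m, m < n → (σs'⁻¹ * κ * σs) m = m := by
      intro m hm
      have hκs : κ (σs m) = σs' m := by
        rw [hκ_app]
        exact kf_spec_s n k σs σt σs' σt' _ ⟨⟨m, hm⟩, rfl⟩ ⟨m, hm⟩ rfl
      show σs'⁻¹ (κ (σs m)) = m
      rw [hκs, Equiv.Perm.inv_def, Equiv.symm_apply_apply]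
    -- κ ∘ σt = σt' on {0,…,k−1}
    have hut : ∀ m, m < k → (σt'⁻¹ * κ * σt) m = m := by
      intro m hm
      have hκt : κ (σt m) = σt' m := by
        rw [hκ_app]
        exact kf_apply_t n k L σs σt σs' σt' h1.2.2.2.2 h2.2.2.2.2 ⟨m, hm⟩
      show σt'⁻¹ (κ (σt m)) = m
      rw [hκt, Equiv.Perm.inv_def, Equiv.symm_apply_apply]
    have hcs : embNat I X (σs'⁻¹ * κ * σs) * g = g * embNat I X (σs'⁻¹ * κ * σs) :=
      embNat_comm g n hg.2 _ hus
    have hct : embNat I X (σt'⁻¹ * κ * σt) * h = h * embNat I X (σt'⁻¹ * κ * σt) :=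
      embNat_comm h k hh.2 _ hut
    have key : ∀ (σ σ' : Equiv.Perm ℕ) (p : Equiv.Perm (X ⊕ I × ℕ)),
        embNat I X (σ'⁻¹ * κ * σ) * p = p * embNat I X (σ'⁻¹ * κ * σ) →
        embNat I X κ * (embNat I X σ * p * (embNat I X σ)⁻¹) * (embNat I X κ)⁻¹ =
          embNat I X σ' * p * (embNat I X σ')⁻¹ := by
      intro σ σ' p hc
      have hks : embNat I X κ * embNat I X σ = embNat I X σ' * embNat I X (σ'⁻¹ * κ * σ) := by
        rw [← embNat_mul, ← embNat_mul]
        congr 1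
        group
      have hconj : embNat I X (σ'⁻¹ * κ * σ) * p * (embNat I X (σ'⁻¹ * κ * σ))⁻¹ = p := by
        rw [hc, mul_inv_cancel_right]
      calc embNat I X κ * (embNat I X σ * p * (embNat I X σ)⁻¹) * (embNat I X κ)⁻¹
          = (embNat I X κ * embNat I X σ) * p * (embNat I X κ * embNat I X σ)⁻¹ := by
            group
        _ = (embNat I X σ' * embNat I X (σ'⁻¹ * κ * σ)) * p *
              (embNat I X σ' * embNat I X (σ'⁻¹ * κ * σ))⁻¹ := by rw [hks]
        _ = embNat I X σ' * (embNat I X (σ'⁻¹ * κ * σ) * p *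
              (embNat I X (σ'⁻¹ * κ * σ))⁻¹) * (embNat I X σ')⁻¹ := by group
        _ = embNat I X σ' * p * (embNat I X σ')⁻¹ := by rw [hconj]
    have key_s := key σs σs' g hcs
    have key_t := key σt σt' h hct
    rw [← key_s, ← key_t]
    group

end
end

section
/- Suppose X = ∅. Let g ∈ G_n and h ∈ G_k. Then for every N ∈ ℕ, the commutator A_N[n,g] * A_N[k,h] − A_N[k,h] * A_N[n,g] lies in the complex linear span of the elements A_N[m,r] with m ≤ n + k − 1 and r ∈ G_m. -/
noncomputable section

namespace ANAux

variable {I X : Type*}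

lemma embNat_mul' (τ ρ : Equiv.Perm ℕ) :
    embNat I X (τ * ρ) = embNat I X τ * embNat I X ρ := by
  ext v; rcases v with x | ⟨i, m⟩ <;> rfl

lemma embNat_one' : embNat I X (1 : Equiv.Perm ℕ) = 1 := by
  ext v; rcases v with x | ⟨i, m⟩ <;> rfl

lemma embNat_inv' (τ : Equiv.Perm ℕ) : (embNat I X τ)⁻¹ = embNat I X τ⁻¹ := by
  symm
  apply eq_inv_of_mul_eq_one_left
  rw [← embNat_mul']
  simp [embNat_one']

lemma embFin_mul' {N : ℕ} (σ ρ : Equiv.Perm (Fin N)) :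
    embFin I X N (σ * ρ) = embFin I X N σ * embFin I X N ρ := by
  unfold embFin
  rw [← Equiv.Perm.extendDomain_mul, embNat_mul']

lemma embFin_inv' {N : ℕ} (σ : Equiv.Perm (Fin N)) :
    (embFin I X N σ)⁻¹ = embFin I X N σ⁻¹ := by
  unfold embFin
  rw [embNat_inv', Equiv.Perm.extendDomain_inv]

lemma embFin_one' {N : ℕ} : embFin I X N (1 : Equiv.Perm (Fin N)) = 1 := by
  unfold embFin
  rw [Equiv.Perm.extendDomain_one, embNat_one']

lemma extD_lt {N : ℕ} (π : Equiv.Perm (Fin N)) {b : ℕ} (hb : b < N) :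
    π.extendDomain Fin.equivSubtype b = (π ⟨b, hb⟩ : Fin N) := by
  rw [Equiv.Perm.extendDomain_apply_subtype _ Fin.equivSubtype hb]; rfl

lemma extD_ge {N : ℕ} (π : Equiv.Perm (Fin N)) {b : ℕ} (hb : ¬ b < N) :
    π.extendDomain Fin.equivSubtype b = b :=
  Equiv.Perm.extendDomain_apply_not_subtype _ _ hb

lemma embFin_apply_inr {N : ℕ} (σ : Equiv.Perm (Fin N)) (i : I) (b : ℕ) :
    embFin I X N σ (Sum.inr (i, b)) = Sum.inr (i, σ.extendDomain Fin.equivSubtype b) := rfl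

/-- Conjugation of an element of `S(V)` by the image of a permutation of `Fin N`. -/
def cjP {I X : Type*} (N : ℕ) (σ : Equiv.Perm (Fin N)) (x : Equiv.Perm (X ⊕ I × ℕ)) :
    Equiv.Perm (X ⊕ I × ℕ) := embFin I X N σ * x * (embFin I X N σ)⁻¹

lemma cjP_cjP {N : ℕ} (σ σ₀ : Equiv.Perm (Fin N)) (x : Equiv.Perm (X ⊕ I × ℕ)) :
    cjP N (σ * σ₀) x = cjP N σ (cjP N σ₀ x) := by
  simp [cjP, embFin_mul', mul_inv_rev, mul_assoc]

lemma cjP_mul {N : ℕ} (σ : Equiv.Perm (Fin N)) (x y : Equiv.Perm (X ⊕ I × ℕ)) :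
    cjP N σ (x * y) = cjP N σ x * cjP N σ y := by
  simp [cjP, mul_assoc]

lemma cjP_one {N : ℕ} (x : Equiv.Perm (X ⊕ I × ℕ)) : cjP N 1 x = x := by
  simp [cjP, embFin_one']

lemma conj_fix {e x : Equiv.Perm (X ⊕ I × ℕ)} {v : X ⊕ I × ℕ}
    (hx : x (e⁻¹ v) = e⁻¹ v) : (e * x * e⁻¹) v = v := by
  rw [Equiv.Perm.mul_apply, Equiv.Perm.mul_apply, hx, Equiv.Perm.inv_def, Equiv.apply_symm_apply]

lemma mem_image_castLE {N j : ℕ} (hj : j ≤ N) (z : Fin N) :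
    z ∈ Finset.image (Fin.castLE hj) Finset.univ ↔ (z : ℕ) < j := by
  simp only [Finset.mem_image, Finset.mem_univ, true_and]
  constructor
  · rintro ⟨y, rfl⟩; exact y.isLt
  · intro hz; exact ⟨⟨(z : ℕ), hz⟩, Fin.ext rfl⟩

lemma card_image_castLE {N j : ℕ} (hj : j ≤ N) :
    (Finset.image (Fin.castLE hj) Finset.univ).card = j := by
  rw [Finset.card_image_of_injective _ (Fin.castLE_injective hj), Finset.card_univ,
    Fintype.card_fin]

/-- The sum `Σ_{σ ∈ K_N} σ x σ⁻¹` in the group algebra (unnormalised `A_N`). -/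
def SS (I X : Type*) (N : ℕ) (x : Equiv.Perm (X ⊕ I × ℕ)) :
    MonoidAlgebra ℂ (Equiv.Perm (X ⊕ I × ℕ)) :=
  ∑ σ : Equiv.Perm (Fin N), MonoidAlgebra.of ℂ (Equiv.Perm (X ⊕ I × ℕ)) (cjP N σ x)

lemma SS_conj {N : ℕ} (σ₀ : Equiv.Perm (Fin N)) (x : Equiv.Perm (X ⊕ I × ℕ)) :
    SS I X N (cjP N σ₀ x) = SS I X N x := by
  refine Fintype.sum_equiv (Equiv.mulRight σ₀) _ _ (fun σ => ?_)
  simp only [Equiv.coe_mulRight, cjP_cjP]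

lemma AN_eq {N j : ℕ} (hj : j ≤ N) (x : Equiv.Perm (X ⊕ I × ℕ)) :
    AN I X N j x = ((Nat.factorial (N - j) : ℂ))⁻¹ • SS I X N x := by
  rw [AN, if_pos hj]; rfl

lemma SS_eq {N j : ℕ} (hj : j ≤ N) (x : Equiv.Perm (X ⊕ I × ℕ)) :
    SS I X N x = ((Nat.factorial (N - j) : ℂ)) • AN I X N j x := by
  rw [AN_eq hj, smul_smul, mul_inv_cancel₀ (Nat.cast_ne_zero.mpr (Nat.factorial_ne_zero _)),
    one_smul]

lemma SS_mul (N : ℕ) (x y : Equiv.Perm (X ⊕ I × ℕ)) :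
    SS I X N x * SS I X N y
      = ∑ σ : Equiv.Perm (Fin N), ∑ τ : Equiv.Perm (Fin N),
          MonoidAlgebra.of ℂ (Equiv.Perm (X ⊕ I × ℕ)) (cjP N σ (x * cjP N τ y)) := by
  rw [SS, SS, Finset.sum_mul_sum]
  refine Finset.sum_congr rfl fun σ _ => ?_
  refine (Fintype.sum_equiv (Equiv.mulLeft σ) _ _ (fun τ => ?_)).symm
  rw [← map_mul, Equiv.coe_mulLeft, cjP_cjP, ← cjP_mul]

lemma SS_mul_left (N : ℕ) (x y : Equiv.Perm (X ⊕ I × ℕ)) :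
    SS I X N x * SS I X N y = ∑ τ : Equiv.Perm (Fin N), SS I X N (x * cjP N τ y) := by
  rw [SS_mul, Finset.sum_comm]
  rfl

lemma SS_mul_right (N : ℕ) (x y : Equiv.Perm (X ⊕ I × ℕ)) :
    SS I X N y * SS I X N x = ∑ τ : Equiv.Perm (Fin N), SS I X N (cjP N τ y * x) := by
  rw [SS_mul_left]
  refine (Fintype.sum_equiv (Equiv.inv (Equiv.Perm (Fin N))) _ _ (fun τ => ?_)).symm
  have h1 : cjP N τ⁻¹ (cjP N τ y * x) = y * cjP N τ⁻¹ x := by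
    rw [cjP_mul, ← cjP_cjP, inv_mul_cancel, cjP_one]
  rw [Equiv.inv_apply, ← h1, SS_conj]

end ANAux

open ANAux in
/-- Suppose `X = ∅`.  For `g ∈ G_n`, `h ∈ G_k` and every `N`, the commutator
`A_N[n,g] * A_N[k,h] − A_N[k,h] * A_N[n,g]` lies in the complex linear span of the
elements `A_N[m,r]` with `m ≤ n + k − 1` (i.e. `m < n + k`) and `r ∈ G_m`. -/
theorem commutator_AN_mem_span
    {I X : Type*} [Finite I] [IsEmpty X]
    (Ginf : Subgroup (Equiv.Perm (X ⊕ I × ℕ)))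
    (hGfs : ∀ g ∈ Ginf, {v : X ⊕ I × ℕ | g v ≠ v}.Finite)
    (hGS : ∀ τ : Equiv.Perm ℕ, {m : ℕ | τ m ≠ m}.Finite → embNat I X τ ∈ Ginf)
    (n k : ℕ) (g h : Equiv.Perm (X ⊕ I × ℕ))
    (hg : g ∈ Gset Ginf n) (hh : h ∈ Gset Ginf k) (N : ℕ) :
    AN I X N n g * AN I X N k h - AN I X N k h * AN I X N n g
      ∈ Submodule.span ℂ
          {x : MonoidAlgebra ℂ (Equiv.Perm (X ⊕ I × ℕ)) |
            ∃ m : ℕ, m < n + k ∧ ∃ r ∈ Gset Ginf m, x = AN I X N m r} := by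
  classical
  by_cases hnN : n ≤ N
  swap
  · have h0 : AN I X N n g = 0 := by rw [AN, if_neg hnN]
    rw [h0, zero_mul, mul_zero, sub_zero]
    exact zero_mem _
  by_cases hkN : k ≤ N
  swap
  · have h0 : AN I X N k h = 0 := by rw [AN, if_neg hkN]
    rw [h0, zero_mul, mul_zero, sub_zero]
    exact zero_mem _
  -- membership of `embFin` elements in `Ginf`
  have hembFin_mem : ∀ σ : Equiv.Perm (Fin N), embFin I X N σ ∈ Ginf := by
    intro σ
    apply hGS
    apply Set.Finite.subset (Set.finite_Iio N)
    intro b hb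
    by_contra hbN
    exact hb (extD_ge σ (by simpa using hbN))
  -- the key pointwise statement
  have key : ∀ τ : Equiv.Perm (Fin N),
      SS I X N (g * cjP N τ h) - SS I X N (cjP N τ h * g)
        ∈ Submodule.span ℂ
          {x : MonoidAlgebra ℂ (Equiv.Perm (X ⊕ I × ℕ)) |
            ∃ m : ℕ, m < n + k ∧ ∃ r ∈ Gset Ginf m, x = AN I X N m r} := by
    intro τ
    -- `w` fixes every `(i, a)` with `k ≤ τ̂⁻¹ a`
    have w_fix : ∀ (i : I) (a : ℕ), k ≤ (τ⁻¹).extendDomain Fin.equivSubtype a →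
        cjP N τ h (Sum.inr (i, a)) = Sum.inr (i, a) := by
      intro i a ha
      apply conj_fix
      have hinv : (embFin I X N τ)⁻¹ (Sum.inr (i, a))
          = Sum.inr (i, (τ⁻¹).extendDomain Fin.equivSubtype a) := by
        rw [embFin_inv']; rfl
      rw [hinv]
      exact hh.2 i _ ha
    by_cases hdis : ∀ y : Fin N, (y : ℕ) < k → n ≤ ((τ y : Fin N) : ℕ)
    · -- disjoint supports: the two terms agree
      have hcomm : g * cjP N τ h = cjP N τ h * g := by
        refine Equiv.Perm.Disjoint.commute ?_
        intro v
        rcases v with x | ⟨i, b⟩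
        · exact (IsEmpty.false x).elim
        by_cases hbn : b < n
        · right
          have hbN' : b < N := lt_of_lt_of_le hbn hnN
          apply w_fix
          rw [extD_lt τ⁻¹ hbN']
          by_contra hlt
          push_neg at hlt
          have := hdis (τ⁻¹ ⟨b, hbN'⟩) hlt
          rw [Equiv.Perm.inv_def, Equiv.apply_symm_apply] at this
          exact absurd this (not_le.mpr hbn)
        · left
          exact hg.2 i b (le_of_not_gt hbn)
      rw [hcomm, sub_self]
      exact zero_mem _
    · -- overlapping supports: both terms are spanning elements at a lower level
      push_neg at hdis
      obtain ⟨y, hyk, hyn⟩ := hdis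
      set Sn : Finset (Fin N) := Finset.image (Fin.castLE hnN) Finset.univ with hSndef
      set Tk : Finset (Fin N) := Finset.image τ (Finset.image (Fin.castLE hkN) Finset.univ)
        with hTkdef
      have hSn : ∀ z : Fin N, z ∈ Sn ↔ (z : ℕ) < n := fun z => mem_image_castLE hnN z
      have hTk : ∀ z : Fin N, z ∈ Tk ↔ ∃ y : Fin N, (y : ℕ) < k ∧ τ y = z := by
        intro z
        rw [hTkdef, Finset.mem_image]
        constructor
        · rintro ⟨y', hy', rfl⟩
          exact ⟨y', (mem_image_castLE hkN y').1 hy', rfl⟩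
        · rintro ⟨y', hy', rfl⟩
          exact ⟨y', (mem_image_castLE hkN y').2 hy', rfl⟩
      set S : Finset (Fin N) := Sn ∪ Tk with hSdef
      set m : ℕ := S.card with hmdef
      have hcardSn : Sn.card = n := card_image_castLE hnN
      have hcardTk : Tk.card = k := by
        rw [hTkdef, Finset.card_image_of_injective _ τ.injective, card_image_castLE hkN]
      have hinter : τ y ∈ Sn ∩ Tk := by
        rw [Finset.mem_inter, hSn, hTk]
        exact ⟨hyn, y, hyk, rfl⟩
      have hmlt : m < n + k := by
        have h1 := Finset.card_union_add_card_inter Sn Tk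
        have h2 : 1 ≤ (Sn ∩ Tk).card := Finset.card_pos.mpr ⟨τ y, hinter⟩
        rw [hcardSn, hcardTk, ← hSdef, ← hmdef] at h1
        omega
      have hmN : m ≤ N := by
        have := Finset.card_le_univ S
        simpa using this
      -- a permutation pushing `S` into the initial segment of length `m`
      have hcardEq : Fintype.card {z : Fin N // z ∈ S}
          = Fintype.card {z : Fin N // z ∈ Finset.image (Fin.castLE hmN) Finset.univ} := by
        rw [Fintype.card_coe, Fintype.card_coe, card_image_castLE hmN]
      set σ₀ : Equiv.Perm (Fin N) := (Fintype.equivOfCardEq hcardEq).extendSubtype with hσ₀def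
      have hσ₀ : ∀ z : Fin N, z ∈ S → ((σ₀ z : Fin N) : ℕ) < m := by
        intro z hz
        have := (Fintype.equivOfCardEq hcardEq).extendSubtype_mem z hz
        exact (mem_image_castLE hmN _).1 this
      have hnotS : ∀ b : Fin N, m ≤ (b : ℕ) → σ₀⁻¹ b ∉ S := by
        intro b hb hmem
        have := hσ₀ _ hmem
        rw [Equiv.Perm.inv_def, Equiv.apply_symm_apply] at this
        omega
      -- the two conjugated products lie in `G_m`
      have ha : ∀ b : ℕ, m ≤ b →
          n ≤ (σ₀⁻¹).extendDomain Fin.equivSubtype b ∧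
          k ≤ (τ⁻¹).extendDomain Fin.equivSubtype ((σ₀⁻¹).extendDomain Fin.equivSubtype b) := by
        intro b hb
        by_cases hbN : b < N
        · rw [extD_lt σ₀⁻¹ hbN]
          set af : Fin N := σ₀⁻¹ ⟨b, hbN⟩ with hafdef
          have hafS : af ∉ S := hnotS ⟨b, hbN⟩ hb
          constructor
          · by_contra hlt
            push_neg at hlt
            exact hafS (Finset.mem_union_left _ ((hSn af).2 hlt))
          · have hafN : (af : ℕ) < N := af.isLt
            rw [extD_lt τ⁻¹ hafN]
            by_contra hlt
            push_neg at hlt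
            refine hafS (Finset.mem_union_right _ ((hTk af).2
              ⟨τ⁻¹ ⟨(af : ℕ), hafN⟩, hlt, ?_⟩))
            rw [show (⟨(af : ℕ), hafN⟩ : Fin N) = af from Fin.ext rfl,
              Equiv.Perm.inv_def, Equiv.apply_symm_apply]
        · rw [extD_ge σ₀⁻¹ hbN, extD_ge τ⁻¹ hbN]
          omega
      have hwmem : cjP N τ h ∈ Ginf :=
        mul_mem (mul_mem (hembFin_mem τ) hh.1) (inv_mem (hembFin_mem τ))
      have hr₁ : cjP N σ₀ (g * cjP N τ h) ∈ Gset Ginf m := by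
        constructor
        · exact mul_mem (mul_mem (hembFin_mem σ₀) (mul_mem hg.1 hwmem))
            (inv_mem (hembFin_mem σ₀))
        · intro i b hb
          obtain ⟨ha1, ha2⟩ := ha b hb
          apply conj_fix
          have hinv : (embFin I X N σ₀)⁻¹ (Sum.inr (i, b))
              = Sum.inr (i, (σ₀⁻¹).extendDomain Fin.equivSubtype b) := by
            rw [embFin_inv']; rfl
          rw [hinv, Equiv.Perm.mul_apply, w_fix i _ ha2, hg.2 i _ ha1]
      have hr₂ : cjP N σ₀ (cjP N τ h * g) ∈ Gset Ginf m := by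
        constructor
        · exact mul_mem (mul_mem (hembFin_mem σ₀) (mul_mem hwmem hg.1))
            (inv_mem (hembFin_mem σ₀))
        · intro i b hb
          obtain ⟨ha1, ha2⟩ := ha b hb
          apply conj_fix
          have hinv : (embFin I X N σ₀)⁻¹ (Sum.inr (i, b))
              = Sum.inr (i, (σ₀⁻¹).extendDomain Fin.equivSubtype b) := by
            rw [embFin_inv']; rfl
          rw [hinv, Equiv.Perm.mul_apply, hg.2 i _ ha1, w_fix i _ ha2]
      have e1 : SS I X N (g * cjP N τ h)
          = ((Nat.factorial (N - m) : ℂ)) • AN I X N m (cjP N σ₀ (g * cjP N τ h)) := by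
        rw [← SS_conj σ₀ (g * cjP N τ h)]
        exact SS_eq hmN _
      have e2 : SS I X N (cjP N τ h * g)
          = ((Nat.factorial (N - m) : ℂ)) • AN I X N m (cjP N σ₀ (cjP N τ h * g)) := by
        rw [← SS_conj σ₀ (cjP N τ h * g)]
        exact SS_eq hmN _
      rw [e1, e2]
      refine sub_mem (Submodule.smul_mem _ _ (Submodule.subset_span ?_))
        (Submodule.smul_mem _ _ (Submodule.subset_span ?_))
      · exact ⟨m, hmlt, _, hr₁, rfl⟩
      · exact ⟨m, hmlt, _, hr₂, rfl⟩
  -- assemble the commutator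
  have hmain : AN I X N n g * AN I X N k h - AN I X N k h * AN I X N n g
      = (((Nat.factorial (N - n) : ℂ))⁻¹ * ((Nat.factorial (N - k) : ℂ))⁻¹) •
          ∑ τ : Equiv.Perm (Fin N),
            (SS I X N (g * cjP N τ h) - SS I X N (cjP N τ h * g)) := by
    rw [AN_eq hnN g, AN_eq hkN h]
    rw [smul_mul_assoc, smul_mul_assoc, mul_smul_comm, mul_smul_comm, smul_smul, smul_smul,
      mul_comm ((Nat.factorial (N - k) : ℂ))⁻¹ ((Nat.factorial (N - n) : ℂ))⁻¹, ← smul_sub]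
    rw [SS_mul_left, SS_mul_right, ← Finset.sum_sub_distrib]
  rw [hmain]
  exact Submodule.smul_mem _ _ (Submodule.sum_mem _ fun τ _ => key τ)

end
end

section
/- Suppose X = ∅. Let g ∈ G_n and h ∈ G_k. Then for every N ∈ ℕ, the element (A_N[n,g] * A_N[k,h] − A_N[k,h] * A_N[n,g]) − Σ_λ ( A_N[n+k−1, g ⊛_λ h] − A_N[n+k−1, h ⊛_{λ⁻¹} g] ) lies in the complex linear span of the elements A_N[m,r] with m ≤ n + k − 2 and r ∈ G_m, where the sum runs over all partial bijections λ from {0,…,k−1} to {0,…,n−1} of rank 1 (equivalently, over all pairs (α,β) with α ∈ {0,…,k−1}, β ∈ {0,…,n−1}), λ⁻¹ denotes the inverse partial bijection from {0,…,n−1} to {0,…,k−1}, and g ⊛_λ h, h ⊛_{λ⁻¹} g ∈ G_{n+k−1} are computed from arbitrary realizations. -/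
noncomputable section

namespace CAN

open Equiv Finset

variable {I X : Type*}

@[simp] lemma embNat_apply_inr (τ : Equiv.Perm ℕ) (i : I) (m : ℕ) :
    embNat I X τ (Sum.inr (i, m)) = Sum.inr (i, τ m) := rfl

@[simp] lemma embNat_mul (σ τ : Equiv.Perm ℕ) :
    embNat I X (σ * τ) = embNat I X σ * embNat I X τ := by
  ext v; rcases v with x | ⟨i, m⟩ <;> rfl

@[simp] lemma embNat_one : embNat I X (1 : Equiv.Perm ℕ) = 1 := by
  ext v; rcases v with x | ⟨i, m⟩ <;> rfl

@[simp] lemma embNat_inv (τ : Equiv.Perm ℕ) :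
    (embNat I X τ)⁻¹ = embNat I X τ⁻¹ := by
  exact (inv_eq_of_mul_eq_one_right (by rw [← embNat_mul, mul_inv_cancel, embNat_one]))

lemma extend_lt {N : ℕ} (π : Equiv.Perm (Fin N)) {m : ℕ} (h : m < N) :
    π.extendDomain Fin.equivSubtype m = (π ⟨m, h⟩ : ℕ) := by
  rw [Equiv.Perm.extendDomain_apply_subtype _ Fin.equivSubtype h]; rfl

lemma extend_ge {N : ℕ} (π : Equiv.Perm (Fin N)) {m : ℕ} (h : N ≤ m) :
    π.extendDomain Fin.equivSubtype m = m :=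
  Equiv.Perm.extendDomain_apply_not_subtype _ Fin.equivSubtype (not_lt.2 h)

lemma embFin_mul {N : ℕ} (σ τ : Equiv.Perm (Fin N)) :
    embFin I X N (σ * τ) = embFin I X N σ * embFin I X N τ := by
  unfold embFin
  rw [← Equiv.Perm.extendDomain_mul, embNat_mul]

lemma embFin_inv {N : ℕ} (σ : Equiv.Perm (Fin N)) :
    (embFin I X N σ)⁻¹ = embFin I X N σ⁻¹ := by
  refine inv_eq_of_mul_eq_one_right ?_
  rw [← embFin_mul, mul_inv_cancel]
  unfold embFin
  rw [Equiv.Perm.extendDomain_one, embNat_one]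

/-- `g` is supported (in the `ℕ`-coordinate) inside `A`. -/
def SuppS (A : Set ℕ) (g : Equiv.Perm (X ⊕ I × ℕ)) : Prop :=
  ∀ (i : I) (m : ℕ), m ∉ A → g (Sum.inr (i, m)) = Sum.inr (i, m)

lemma suppS_mono {A B : Set ℕ} {g : Equiv.Perm (X ⊕ I × ℕ)} (hAB : A ⊆ B)
    (hg : SuppS A g) : SuppS B g := fun i m hm => hg i m (fun hc => hm (hAB hc))

lemma gset_suppS {Ginf : Subgroup (Equiv.Perm (X ⊕ I × ℕ))} {n : ℕ}
    {g : Equiv.Perm (X ⊕ I × ℕ)} (hg : g ∈ Gset Ginf n) :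
    SuppS {x | x < n} g := fun i m hm => hg.2 i m (not_lt.1 hm)

lemma suppS_apply_mem [IsEmpty X] {A : Set ℕ} {g : Equiv.Perm (X ⊕ I × ℕ)}
    (hg : SuppS A g) (i : I) {m : ℕ} (hm : m ∈ A) :
    ∃ (i' : I) (m' : ℕ), m' ∈ A ∧ g (Sum.inr (i, m)) = Sum.inr (i', m') := by
  rcases hv : g (Sum.inr (i, m)) with x | ⟨i', m'⟩
  · exact (IsEmpty.false x).elim
  · refine ⟨i', m', ?_, rfl⟩
    by_contra hm'
    have h2 := hg i' m' hm'
    have : (Sum.inr (i, m) : X ⊕ I × ℕ) = Sum.inr (i', m') := by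
      apply g.injective; rw [hv, h2]
    simp only [Sum.inr.injEq, Prod.mk.injEq] at this
    exact hm' (this.2 ▸ hm)

lemma suppS_mul {A B : Set ℕ} {u v : Equiv.Perm (X ⊕ I × ℕ)}
    (hu : SuppS A u) (hv : SuppS B v) : SuppS (A ∪ B) (u * v) := by
  intro i m hm
  rw [Set.mem_union] at hm; push_neg at hm
  simp only [Equiv.Perm.mul_apply, hv i m hm.2, hu i m hm.1]

lemma commute_of_disjoint [IsEmpty X] {A B : Set ℕ} {u v : Equiv.Perm (X ⊕ I × ℕ)}
    (hu : SuppS A u) (hv : SuppS B v) (hd : ∀ m ∈ A, m ∉ B) : u * v = v * u := by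
  ext w
  rcases w with x | ⟨i, m⟩
  · exact (IsEmpty.false x).elim
  simp only [Equiv.Perm.mul_apply]
  by_cases hA : m ∈ A
  · rw [hv i m (hd m hA)]
    obtain ⟨i', m', hm', hval⟩ := suppS_apply_mem hu i hA
    rw [hval, hv i' m' (hd m' hm')]
  · rw [hu i m hA]
    by_cases hB : m ∈ B
    · obtain ⟨i', m', hm', hval⟩ := suppS_apply_mem hv i hB
      have : m' ∉ A := fun hc => (hd m' hc) hm'
      rw [hval, hu i' m' this]
    · rw [hv i m hB, hu i m hA]

lemma conj_suppS [IsEmpty X] {A : Set ℕ} {u : Equiv.Perm (X ⊕ I × ℕ)} (τ : Equiv.Perm ℕ)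
    (hu : SuppS A u) : SuppS (τ '' A) (embNat I X τ * u * (embNat I X τ)⁻¹) := by
  intro i m hm
  have hm' : τ⁻¹ m ∉ A := by
    intro hc; exact hm ⟨τ⁻¹ m, hc, by simp⟩
  simp only [Equiv.Perm.mul_apply, embNat_inv, embNat_apply_inr, hu i _ hm']
  simp

lemma conj_eq_of_fixed [IsEmpty X] {A : Set ℕ} {u : Equiv.Perm (X ⊕ I × ℕ)} {τ : Equiv.Perm ℕ}
    (hu : SuppS A u) (hτ : ∀ m ∈ A, τ m = m) :
    embNat I X τ * u * (embNat I X τ)⁻¹ = u := by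
  have hτ' : ∀ m ∈ A, τ⁻¹ m = m := fun m hm => by
    conv_lhs => rw [← hτ m hm]
    simp
  have hτc : ∀ m, m ∉ A → τ⁻¹ m ∉ A := by
    intro m hm hc
    have h2 := hτ _ hc
    rw [Equiv.Perm.inv_def, Equiv.apply_symm_apply] at h2
    exact hm (h2 ▸ hc)
  ext w
  rcases w with x | ⟨i, m⟩
  · exact (IsEmpty.false x).elim
  simp only [Equiv.Perm.mul_apply, embNat_inv, embNat_apply_inr]
  by_cases hA : m ∈ A
  · rw [hτ' m hA]
    obtain ⟨i', m', hm', hval⟩ := suppS_apply_mem hu i hA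
    rw [hval, embNat_apply_inr, hτ m' hm']
  · rw [hu i _ (hτc m hA), embNat_apply_inr, Equiv.Perm.inv_def, Equiv.apply_symm_apply, hu i m hA]

lemma conj_eq_conj [IsEmpty X] {A : Set ℕ} {u : Equiv.Perm (X ⊕ I × ℕ)} {τ₁ τ₂ : Equiv.Perm ℕ}
    (hu : SuppS A u) (hτ : ∀ m ∈ A, τ₁ m = τ₂ m) :
    embNat I X τ₁ * u * (embNat I X τ₁)⁻¹ = embNat I X τ₂ * u * (embNat I X τ₂)⁻¹ := by
  have key : embNat I X (τ₂⁻¹ * τ₁) * u * (embNat I X (τ₂⁻¹ * τ₁))⁻¹ = u :=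
    conj_eq_of_fixed hu (fun m hm => by simp [hτ m hm])
  set a := embNat I X τ₁ with ha
  set b := embNat I X τ₂ with hb
  have key2 : (b⁻¹ * a) * u * (b⁻¹ * a)⁻¹ = u := by
    have e1 : b⁻¹ * a = embNat I X (τ₂⁻¹ * τ₁) := by rw [ha, hb, embNat_mul, embNat_inv]
    rw [e1]; exact key
  calc a * u * a⁻¹
      = b * ((b⁻¹ * a) * u * (b⁻¹ * a)⁻¹) * b⁻¹ := by group
    _ = b * u * b⁻¹ := by rw [key2]

/-- The sum `Σ_{σ ∈ K_N} σ u σ⁻¹` in the monoid algebra. -/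
def T (I X : Type*) (N : ℕ) (u : Equiv.Perm (X ⊕ I × ℕ)) :
    MonoidAlgebra ℂ (Equiv.Perm (X ⊕ I × ℕ)) :=
  ∑ σ : Equiv.Perm (Fin N),
    MonoidAlgebra.of ℂ (Equiv.Perm (X ⊕ I × ℕ)) (embFin I X N σ * u * (embFin I X N σ)⁻¹)

lemma T_conj {N : ℕ} (π : Equiv.Perm (Fin N)) (u : Equiv.Perm (X ⊕ I × ℕ)) :
    T I X N (embFin I X N π * u * (embFin I X N π)⁻¹) = T I X N u := by
  unfold T
  apply Fintype.sum_equiv (Equiv.mulRight π)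
  intro σ
  congr 1
  simp only [Equiv.coe_mulRight, embFin_mul, mul_inv_rev, mul_assoc]

lemma AN_eq {N j : ℕ} (h : j ≤ N) (u : Equiv.Perm (X ⊕ I × ℕ)) :
    AN I X N j u = ((Nat.factorial (N - j) : ℂ))⁻¹ • T I X N u := by
  rw [AN, if_pos h]; rfl

lemma T_eq_smul_AN {N j : ℕ} (h : j ≤ N) (u : Equiv.Perm (X ⊕ I × ℕ)) :
    T I X N u = ((Nat.factorial (N - j) : ℂ)) • AN I X N j u := by
  rw [AN_eq h, smul_smul, mul_inv_cancel₀, one_smul]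
  exact_mod_cast Nat.cast_ne_zero.2 (Nat.factorial_ne_zero _)

lemma exists_perm_comp {α γ : Type*} [Fintype α] [Fintype γ] [DecidableEq α]
    (f g : γ → α) (hf : Function.Injective f) (hg : Function.Injective g) :
    ∃ π : Equiv.Perm α, ∀ x, π (f x) = g x := by
  classical
  have hcard : Fintype.card ((Set.range f)ᶜ : Set α) = Fintype.card ((Set.range g)ᶜ : Set α) := by
    rw [Fintype.card_compl_set, Fintype.card_compl_set,
      Set.card_range_of_injective hf, Set.card_range_of_injective hg]
  obtain ⟨ec⟩ := Fintype.card_eq.mp hcard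
  let e₁ : γ ≃ Set.range f := Equiv.ofInjective f hf
  let e₂ : γ ≃ Set.range g := Equiv.ofInjective g hg
  refine ⟨((Equiv.Set.sumCompl (Set.range f)).symm.trans
    (((e₁.symm.trans e₂)).sumCongr ec)).trans (Equiv.Set.sumCompl (Set.range g)),
    fun x => ?_⟩
  have hfx : f x ∈ Set.range f := ⟨x, rfl⟩
  have h1 : (Equiv.Set.sumCompl (Set.range f)).symm (f x) = Sum.inl ⟨f x, hfx⟩ :=
    Equiv.Set.sumCompl_symm_apply_of_mem hfx
  simp only [Equiv.trans_apply, h1, Equiv.sumCongr_apply, Sum.map_inl]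
  have h2 : e₁.symm ⟨f x, ⟨x, rfl⟩⟩ = x := by
    apply e₁.injective; simp [e₁, Equiv.apply_ofInjective_symm]
  simp only [Equiv.trans_apply, h2]
  exact Equiv.Set.sumCompl_apply_inl _ _

lemma card_ge_subtype (N n : ℕ) : Fintype.card {x : Fin N // n ≤ (x : ℕ)} = N - n := by
  refine (Fintype.card_congr ?_).trans (Fintype.card_fin (N - n))
  exact
    { toFun := fun x => ⟨x.1.1 - n, by have h1 := x.1.2; have h2 := x.2; omega⟩
      invFun := fun y => ⟨⟨n + y.1, by have := y.2; omega⟩, by simp⟩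
      left_inv := fun x => by
        have h2 := x.2
        apply Subtype.ext; apply Fin.ext
        simp only []
        omega
      right_inv := fun y => by
        apply Fin.ext
        simp only []
        omega }

lemma card_fix (N k : ℕ) :
    (Finset.univ.filter fun π : Equiv.Perm (Fin N) =>
      ∀ x : Fin N, (x : ℕ) < k → π x = x).card = Nat.factorial (N - k) := by
  classical
  rw [← Fintype.card_subtype]
  have e : {π : Equiv.Perm (Fin N) // ∀ x : Fin N, (x : ℕ) < k → π x = x}
      ≃ Equiv.Perm {x : Fin N // k ≤ (x : ℕ)} :=
    (Equiv.subtypeEquivRight (fun π =>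
      ⟨fun H a ha => H a (not_le.1 ha), fun H x hx => H x (not_le.2 hx)⟩)).trans
      (Equiv.Perm.subtypeEquivSubtypePerm (fun x : Fin N => k ≤ (x : ℕ))).symm
  rw [Fintype.card_congr e, Fintype.card_perm, card_ge_subtype]

lemma card_extends {N k : ℕ} (hk : k ≤ N) (f : Fin k → Fin N) (hf : Function.Injective f) :
    (Finset.univ.filter fun ρ : Equiv.Perm (Fin N) =>
      ∀ i : Fin k, ρ (Fin.castLE hk i) = f i).card = Nat.factorial (N - k) := by
  classical
  obtain ⟨ρ₀, hρ₀⟩ := exists_perm_comp (fun i : Fin k => Fin.castLE hk i) f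
    (fun a b hab => Fin.castLE_injective hk hab) hf
  rw [← card_fix N k]
  apply Finset.card_bij (fun ρ _ => ρ₀⁻¹ * ρ)
  · intro ρ hρ
    simp only [Finset.mem_filter, Finset.mem_univ, true_and] at hρ ⊢
    intro x hx
    have hxeq : x = Fin.castLE hk ⟨(x : ℕ), hx⟩ := by apply Fin.ext; rfl
    have : ρ x = ρ₀ x := by
      rw [hxeq, hρ ⟨(x : ℕ), hx⟩, hρ₀]
    simp [Equiv.Perm.mul_apply, this]
  · intro ρ hρ ρ' hρ' hh
    exact mul_left_cancel hh
  · intro π hπ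
    refine ⟨ρ₀ * π, ?_, by group⟩
    simp only [Finset.mem_filter, Finset.mem_univ, true_and] at hπ ⊢
    intro i
    have h1 : π (Fin.castLE hk i) = Fin.castLE hk i := hπ _ (by simp)
    simp [Equiv.Perm.mul_apply, h1, hρ₀ i]

lemma card_E {N n k : ℕ} (hk : k ≤ N) (hn : n ≤ N) (α : Fin k) (β : Fin n) :
    (Finset.univ.filter fun f : Fin k → Fin N =>
        Function.Injective f ∧ f α = Fin.castLE hn β ∧
          ∀ i : Fin k, i ≠ α → n ≤ (f i : ℕ)).card
      = Nat.descFactorial (N - n) (k - 1) := by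
  classical
  rw [← Fintype.card_subtype]
  have e : {f : Fin k → Fin N // Function.Injective f ∧ f α = Fin.castLE hn β ∧
        ∀ i : Fin k, i ≠ α → n ≤ (f i : ℕ)}
      ≃ ({i : Fin k // i ≠ α} ↪ {x : Fin N // n ≤ (x : ℕ)}) :=
    { toFun := fun F => ⟨fun i => ⟨F.1 i.1, F.2.2.2 i.1 i.2⟩,
        fun a b hab => Subtype.ext (F.2.1 (congrArg Subtype.val hab))⟩
      invFun := fun em =>
        ⟨fun i => if h : i = α then Fin.castLE hn β else (em ⟨i, h⟩).1, by
          constructor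
          · intro a b hab
            dsimp only at hab
            by_cases ha : a = α <;> by_cases hb : b = α
            · rw [ha, hb]
            · rw [dif_pos ha, dif_neg hb] at hab
              exfalso
              have h1 := (em ⟨b, hb⟩).2
              have h2 : ((Fin.castLE hn β : Fin N) : ℕ) = ((em ⟨b, hb⟩).1 : ℕ) := by rw [hab]
              simp only [Fin.coe_castLE] at h2
              have := β.2
              omega
            · rw [dif_neg ha, dif_pos hb] at hab
              exfalso
              have h1 := (em ⟨a, ha⟩).2
              have h2 : ((em ⟨a, ha⟩).1 : ℕ) = ((Fin.castLE hn β : Fin N) : ℕ) := by rw [hab]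
              simp only [Fin.coe_castLE] at h2
              have := β.2
              omega
            · rw [dif_neg ha, dif_neg hb] at hab
              have : em ⟨a, ha⟩ = em ⟨b, hb⟩ := Subtype.ext hab
              have := em.injective this
              simpa using congrArg Subtype.val this
          · refine ⟨dif_pos rfl, fun i hi => ?_⟩
            dsimp only
            rw [dif_neg hi]
            exact (em ⟨i, hi⟩).2⟩
      left_inv := fun F => by
        apply Subtype.ext
        funext i
        by_cases hi : i = α
        · rw [hi]; simp only [dif_pos rfl]; exact F.2.2.1.symm
        · simp only [dif_neg hi]
          rfl
      right_inv := fun em => by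
        apply DFunLike.ext
        intro i
        apply Subtype.ext
        simp only [Function.Embedding.coeFn_mk, dif_neg i.2]
        exact dif_neg i.2 }
  rw [Fintype.card_congr e, Fintype.card_embedding_eq, card_ge_subtype]
  congr 1
  have h2 : Fintype.card {i : Fin k // i ≠ α} = k - 1 := by
    have h := Fintype.card_subtype_compl (fun i : Fin k => i = α)
    rw [Fintype.card_subtype_eq, Fintype.card_fin] at h
    exact h
  rw [h2]

lemma card_C {N n k : ℕ} (hk : k ≤ N) (hn : n ≤ N) (α : Fin k) (β : Fin n) :
    (Finset.univ.filter fun ρ : Equiv.Perm (Fin N) =>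
        ρ (Fin.castLE hk α) = Fin.castLE hn β ∧
          ∀ i : Fin k, i ≠ α → n ≤ (ρ (Fin.castLE hk i) : ℕ)).card
      = Nat.descFactorial (N - n) (k - 1) * Nat.factorial (N - k) := by
  classical
  rw [Finset.card_eq_sum_card_fiberwise
      (f := fun ρ : Equiv.Perm (Fin N) => fun i : Fin k => ρ (Fin.castLE hk i))
      (t := Finset.univ.filter fun f : Fin k → Fin N =>
        Function.Injective f ∧ f α = Fin.castLE hn β ∧ ∀ i : Fin k, i ≠ α → n ≤ (f i : ℕ))]
  · rw [Finset.sum_congr rfl (g := fun _ => Nat.factorial (N - k)) (fun f hf => ?_),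
      Finset.sum_const, card_E hk hn α β, smul_eq_mul]
    simp only [Finset.mem_filter, Finset.mem_univ, true_and] at hf
    have hfe : (Finset.univ.filter fun ρ : Equiv.Perm (Fin N) =>
        (ρ (Fin.castLE hk α) = Fin.castLE hn β ∧
          ∀ i : Fin k, i ≠ α → n ≤ (ρ (Fin.castLE hk i) : ℕ)) ∧
        (fun i : Fin k => ρ (Fin.castLE hk i)) = f)
        = Finset.univ.filter fun ρ : Equiv.Perm (Fin N) =>
            ∀ i : Fin k, ρ (Fin.castLE hk i) = f i := by
      ext ρ
      simp only [Finset.mem_filter, Finset.mem_univ, true_and, funext_iff]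
      constructor
      · exact fun H => H.2
      · intro H
        refine ⟨⟨?_, fun i hi => ?_⟩, H⟩
        · rw [H α]; exact hf.2.1
        · rw [H i]; exact hf.2.2 i hi
    rw [Finset.filter_filter, hfe, card_extends hk f hf.1]
  · intro ρ hρ
    simp only [Finset.mem_coe, Finset.mem_filter, Finset.mem_univ, true_and] at hρ ⊢
    exact ⟨fun a b hab => Fin.castLE_injective hk (ρ.injective hab), hρ.1, hρ.2⟩

/-- The graph of the partial bijection associated to `ρ`. -/
def Lam {N n k : ℕ} (hk : k ≤ N) (hn : n ≤ N) (ρ : Equiv.Perm (Fin N)) :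
    Finset (Fin k × Fin n) :=
  Finset.univ.filter fun q => ρ (Fin.castLE hk q.1) = Fin.castLE hn q.2

lemma card_filter_lt {N n : ℕ} (hn : n ≤ N) :
    (Finset.univ.filter fun x : Fin N => (x : ℕ) < n).card = n := by
  classical
  have he : (Finset.univ.filter fun x : Fin N => (x : ℕ) < n)
      = Finset.univ.image (fun j : Fin n => Fin.castLE hn j) := by
    ext x
    simp only [Finset.mem_filter, Finset.mem_univ, true_and, Finset.mem_image]
    constructor
    · intro hx; exact ⟨⟨(x : ℕ), hx⟩, Fin.ext rfl⟩
    · rintro ⟨j, rfl⟩; simpa using j.2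
  rw [he, Finset.card_image_of_injective _ (Fin.castLE_injective hn), Finset.card_univ,
    Fintype.card_fin]

lemma card_image_ck {N k : ℕ} (hk : k ≤ N) (ρ : Equiv.Perm (Fin N)) :
    (Finset.univ.image fun i : Fin k => ρ (Fin.castLE hk i)).card = k := by
  rw [Finset.card_image_of_injective _
    (show Function.Injective (fun i : Fin k => ρ (Fin.castLE hk i)) from
      fun a b hab => Fin.castLE_injective hk (ρ.injective hab)),
    Finset.card_univ, Fintype.card_fin]

lemma card_union_Lam {N n k : ℕ} (hk : k ≤ N) (hn : n ≤ N) (ρ : Equiv.Perm (Fin N)) :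
    ((Finset.univ.filter fun x : Fin N => (x : ℕ) < n) ∪
      Finset.univ.image (fun i : Fin k => ρ (Fin.castLE hk i))).card + (Lam hk hn ρ).card
    = n + k := by
  classical
  set A := Finset.univ.filter fun x : Fin N => (x : ℕ) < n with hA
  set B := Finset.univ.image (fun i : Fin k => ρ (Fin.castLE hk i)) with hB
  have hI : (A ∩ B).card = (Lam hk hn ρ).card := by
    symm
    apply Finset.card_bij (fun q _ => Fin.castLE hn q.2)
    · intro q hq
      simp only [Lam, Finset.mem_filter, Finset.mem_univ, true_and] at hq
      simp only [hA, hB, Finset.mem_inter, Finset.mem_filter, Finset.mem_univ, true_and,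
        Finset.mem_image]
      exact ⟨by simpa using q.2.2, ⟨q.1, hq⟩⟩
    · intro q hq q' hq' hqq
      simp only [Lam, Finset.mem_filter, Finset.mem_univ, true_and] at hq hq'
      have h2 : q.2 = q'.2 := Fin.castLE_injective hn hqq
      have h1 : q.1 = q'.1 := by
        apply Fin.castLE_injective hk
        apply ρ.injective
        rw [hq, hq', h2]
      exact Prod.ext h1 h2
    · intro x hx
      simp only [hA, hB, Finset.mem_inter, Finset.mem_filter, Finset.mem_univ, true_and,
        Finset.mem_image] at hx
      obtain ⟨hxn, i, hi⟩ := hx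
      refine ⟨(i, ⟨(x : ℕ), hxn⟩), ?_, Fin.ext rfl⟩
      simp only [Lam, Finset.mem_filter, Finset.mem_univ, true_and]
      rw [hi]
      exact Fin.ext rfl
  have := Finset.card_union_add_card_inter A B
  rw [hI] at this
  rw [this, card_filter_lt hn, card_image_ck hk]

lemma conj_conj {G : Type*} [Group G] (a b u : G) :
    a * (b * u * b⁻¹) * a⁻¹ = (a * b) * u * (a * b)⁻¹ := by group

lemma conj_mul_dist {G : Type*} [Group G] (a u v : G) :
    a * (u * v) * a⁻¹ = (a * u * a⁻¹) * (a * v * a⁻¹) := by group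

lemma real1 [IsEmpty X] {N n k : ℕ} (hk : k ≤ N) (hn : n ≤ N) (hm1 : n + k - 1 ≤ N)
    {g h : Equiv.Perm (X ⊕ I × ℕ)}
    (hg : SuppS {x : ℕ | x < n} g) (hh : SuppS {x : ℕ | x < k} h)
    (α : Fin k) (β : Fin n) (s t : Equiv.Perm ℕ)
    (hs : ∀ j : Fin n, s (j : ℕ) < n + k - 1)
    (ht : ∀ i : Fin k, t (i : ℕ) < n + k - 1)
    (hst : ∀ (i : Fin k) (j : Fin n), t (i : ℕ) = s (j : ℕ) ↔ i = α ∧ j = β)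
    (ρ : Equiv.Perm (Fin N))
    (hρ1 : ρ (Fin.castLE hk α) = Fin.castLE hn β)
    (hρ2 : ∀ i : Fin k, i ≠ α → n ≤ (ρ (Fin.castLE hk i) : ℕ)) :
    T I X N (g * (embFin I X N ρ * h * (embFin I X N ρ)⁻¹))
      = T I X N ((embNat I X s * g * (embNat I X s)⁻¹) *
          (embNat I X t * h * (embNat I X t)⁻¹)) := by
  classical
  -- the extension of ρ to ℕ
  set rh := ρ.extendDomain (Fin.equivSubtype) with hrh
  have hrhlt : ∀ i : Fin k, rh (i : ℕ) = (ρ (Fin.castLE hk i) : ℕ) := by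
    intro i
    rw [hrh, extend_lt ρ (lt_of_lt_of_le i.2 hk)]
    congr 1
  -- construct the permutation π
  set γ := (Fin n ⊕ {i : Fin k // i ≠ α}) with hγ
  set f : γ → Fin N := Sum.elim (fun j => ⟨s (j : ℕ), lt_of_lt_of_le (hs j) hm1⟩)
    (fun i => ⟨t (i.1 : ℕ), lt_of_lt_of_le (ht i.1) hm1⟩) with hf
  set gf : γ → Fin N := Sum.elim (fun j => Fin.castLE hn j)
    (fun i => ρ (Fin.castLE hk i.1)) with hgf
  have hfinj : Function.Injective f := by
    rintro (a | a) (b | b) hab <;> simp only [hf, Sum.elim_inl, Sum.elim_inr] at hab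
    · have : s (a : ℕ) = s (b : ℕ) := congrArg Fin.val hab
      exact congrArg Sum.inl (Fin.ext (s.injective this))
    · exfalso
      have : t (b.1 : ℕ) = s (a : ℕ) := (congrArg Fin.val hab).symm
      exact b.2 ((hst b.1 a).1 this).1
    · exfalso
      have : t (a.1 : ℕ) = s (b : ℕ) := congrArg Fin.val hab
      exact a.2 ((hst a.1 b).1 this).1
    · have : t (a.1 : ℕ) = t (b.1 : ℕ) := congrArg Fin.val hab
      exact congrArg Sum.inr (Subtype.ext (Fin.ext (t.injective this)))
  have hgfinj : Function.Injective gf := by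
    rintro (a | a) (b | b) hab <;> simp only [hgf, Sum.elim_inl, Sum.elim_inr] at hab
    · exact congrArg Sum.inl (Fin.castLE_injective hn hab)
    · exfalso
      have h1 := hρ2 b.1 b.2
      rw [← hab] at h1
      simp only [Fin.coe_castLE] at h1
      exact absurd h1 (not_le.2 a.2)
    · exfalso
      have h1 := hρ2 a.1 a.2
      rw [hab] at h1
      simp only [Fin.coe_castLE] at h1
      exact absurd h1 (not_le.2 b.2)
    · exact congrArg Sum.inr (Subtype.ext (Fin.castLE_injective hk (ρ.injective hab)))
  obtain ⟨π, hπ⟩ := exists_perm_comp f gf hfinj hgfinj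
  set ph := π.extendDomain (Fin.equivSubtype) with hph
  -- key pointwise facts
  have fact1 : ∀ m : ℕ, m < n → ph (s m) = m := by
    intro m hm
    have h1 : s m < N := lt_of_lt_of_le (hs ⟨m, hm⟩) hm1
    rw [hph, extend_lt π h1]
    have h2 := hπ (Sum.inl ⟨m, hm⟩)
    simp only [hf, hgf, Sum.elim_inl] at h2
    rw [show (⟨s m, h1⟩ : Fin N) = f (Sum.inl ⟨m, hm⟩) from rfl, hπ]
    simp [hgf]
  have fact2 : ∀ m : ℕ, m < k → ph (t m) = rh m := by
    intro m hm
    have h1 : t m < N := lt_of_lt_of_le (ht ⟨m, hm⟩) hm1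
    by_cases hma : (⟨m, hm⟩ : Fin k) = α
    · have htsa : t m = s (β : ℕ) := by
        have := (hst ⟨m, hm⟩ β).2 ⟨hma, rfl⟩
        simpa using this
      rw [htsa, fact1 _ β.2, hrhlt ⟨m, hm⟩]
      rw [show Fin.castLE hk (⟨m, hm⟩ : Fin k) = Fin.castLE hk α by rw [hma], hρ1]
      simp
    · rw [hph, extend_lt π h1]
      rw [show (⟨t m, h1⟩ : Fin N) = f (Sum.inr ⟨⟨m, hm⟩, hma⟩) from rfl, hπ]
      simp only [hgf, Sum.elim_inr]
      rw [hrhlt ⟨m, hm⟩]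
  -- now the conjugation identity
  have key : embFin I X N π *
      ((embNat I X s * g * (embNat I X s)⁻¹) * (embNat I X t * h * (embNat I X t)⁻¹)) *
      (embFin I X N π)⁻¹
      = g * (embFin I X N ρ * h * (embFin I X N ρ)⁻¹) := by
    rw [conj_mul_dist]
    have e1 : embFin I X N π * (embNat I X s * g * (embNat I X s)⁻¹) * (embFin I X N π)⁻¹
        = g := by
      show embNat I X ph * (embNat I X s * g * (embNat I X s)⁻¹) * (embNat I X ph)⁻¹ = g
      rw [conj_conj, ← embNat_mul]
      exact conj_eq_of_fixed hg (fun m hm => fact1 m hm)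
    have e2 : embFin I X N π * (embNat I X t * h * (embNat I X t)⁻¹) * (embFin I X N π)⁻¹
        = embFin I X N ρ * h * (embFin I X N ρ)⁻¹ := by
      show embNat I X ph * (embNat I X t * h * (embNat I X t)⁻¹) * (embNat I X ph)⁻¹
        = embNat I X rh * h * (embNat I X rh)⁻¹
      rw [conj_conj, ← embNat_mul]
      exact conj_eq_conj hh (fun m hm => fact2 m hm)
    rw [e1, e2]
  rw [← key, T_conj]

lemma real2 [IsEmpty X] {N n k : ℕ} (hk : k ≤ N) (hn : n ≤ N) (hm1 : n + k - 1 ≤ N)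
    {g h : Equiv.Perm (X ⊕ I × ℕ)}
    (hg : SuppS {x : ℕ | x < n} g) (hh : SuppS {x : ℕ | x < k} h)
    (α : Fin k) (β : Fin n) (s t : Equiv.Perm ℕ)
    (hs : ∀ i : Fin k, s (i : ℕ) < n + k - 1)
    (ht : ∀ j : Fin n, t (j : ℕ) < n + k - 1)
    (hst : ∀ (j : Fin n) (i : Fin k), t (j : ℕ) = s (i : ℕ) ↔ j = β ∧ i = α)
    (ρ : Equiv.Perm (Fin N))
    (hρ1 : ρ (Fin.castLE hk α) = Fin.castLE hn β)
    (hρ2 : ∀ i : Fin k, i ≠ α → n ≤ (ρ (Fin.castLE hk i) : ℕ)) :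
    T I X N ((embFin I X N ρ * h * (embFin I X N ρ)⁻¹) * g)
      = T I X N ((embNat I X s * h * (embNat I X s)⁻¹) *
          (embNat I X t * g * (embNat I X t)⁻¹)) := by
  classical
  set rh := ρ.extendDomain (Fin.equivSubtype) with hrh
  have hrhlt : ∀ i : Fin k, rh (i : ℕ) = (ρ (Fin.castLE hk i) : ℕ) := by
    intro i
    rw [hrh, extend_lt ρ (lt_of_lt_of_le i.2 hk)]
    congr 1
  have hLam : ∀ (i : Fin k) (j : Fin n), ρ (Fin.castLE hk i) = Fin.castLE hn j →
      i = α ∧ j = β := by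
    intro i j hij
    by_cases hia : i = α
    · refine ⟨hia, ?_⟩
      apply Fin.castLE_injective hn
      rw [← hij, hia, hρ1]
    · exfalso
      have h1 := hρ2 i hia
      rw [hij] at h1
      simp only [Fin.coe_castLE] at h1
      exact absurd h1 (not_le.2 j.2)
  set γ := (Fin k ⊕ {j : Fin n // j ≠ β}) with hγ
  set f : γ → Fin N := Sum.elim (fun i => ⟨s (i : ℕ), lt_of_lt_of_le (hs i) hm1⟩)
    (fun j => ⟨t (j.1 : ℕ), lt_of_lt_of_le (ht j.1) hm1⟩) with hf
  set gf : γ → Fin N := Sum.elim (fun i => ρ (Fin.castLE hk i))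
    (fun j => Fin.castLE hn j.1) with hgf
  have hfinj : Function.Injective f := by
    rintro (a | a) (b | b) hab <;> simp only [hf, Sum.elim_inl, Sum.elim_inr] at hab
    · have : s (a : ℕ) = s (b : ℕ) := congrArg Fin.val hab
      exact congrArg Sum.inl (Fin.ext (s.injective this))
    · exfalso
      have : t (b.1 : ℕ) = s (a : ℕ) := (congrArg Fin.val hab).symm
      exact b.2 ((hst b.1 a).1 this).1
    · exfalso
      have : t (a.1 : ℕ) = s (b : ℕ) := congrArg Fin.val hab
      exact a.2 ((hst a.1 b).1 this).1
    · have : t (a.1 : ℕ) = t (b.1 : ℕ) := congrArg Fin.val hab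
      exact congrArg Sum.inr (Subtype.ext (Fin.ext (t.injective this)))
  have hgfinj : Function.Injective gf := by
    rintro (a | a) (b | b) hab <;> simp only [hgf, Sum.elim_inl, Sum.elim_inr] at hab
    · exact congrArg Sum.inl (Fin.castLE_injective hk (ρ.injective hab))
    · exact (b.2 (hLam a b.1 hab).2).elim
    · exact (a.2 (hLam b a.1 hab.symm).2).elim
    · exact congrArg Sum.inr (Subtype.ext (Fin.castLE_injective hn hab))
  obtain ⟨π, hπ⟩ := exists_perm_comp f gf hfinj hgfinj
  set ph := π.extendDomain (Fin.equivSubtype) with hph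
  have fact1 : ∀ m : ℕ, m < k → ph (s m) = rh m := by
    intro m hm
    have h1 : s m < N := lt_of_lt_of_le (hs ⟨m, hm⟩) hm1
    rw [hph, extend_lt π h1]
    rw [show (⟨s m, h1⟩ : Fin N) = f (Sum.inl ⟨m, hm⟩) from rfl, hπ]
    simp only [hgf, Sum.elim_inl]
    rw [hrhlt ⟨m, hm⟩]
  have fact2 : ∀ m : ℕ, m < n → ph (t m) = m := by
    intro m hm
    have h1 : t m < N := lt_of_lt_of_le (ht ⟨m, hm⟩) hm1
    by_cases hmb : (⟨m, hm⟩ : Fin n) = β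
    · have htsa : t m = s (α : ℕ) := by
        have := (hst ⟨m, hm⟩ α).2 ⟨hmb, rfl⟩
        simpa using this
      rw [htsa, fact1 _ α.2, hrhlt α, hρ1]
      simp only [Fin.coe_castLE]
      exact (congrArg Fin.val hmb).symm
    · rw [hph, extend_lt π h1]
      rw [show (⟨t m, h1⟩ : Fin N) = f (Sum.inr ⟨⟨m, hm⟩, hmb⟩) from rfl, hπ]
      simp [hgf]
  have key : embFin I X N π *
      ((embNat I X s * h * (embNat I X s)⁻¹) * (embNat I X t * g * (embNat I X t)⁻¹)) *
      (embFin I X N π)⁻¹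
      = (embFin I X N ρ * h * (embFin I X N ρ)⁻¹) * g := by
    rw [conj_mul_dist]
    have e1 : embFin I X N π * (embNat I X s * h * (embNat I X s)⁻¹) * (embFin I X N π)⁻¹
        = embFin I X N ρ * h * (embFin I X N ρ)⁻¹ := by
      show embNat I X ph * (embNat I X s * h * (embNat I X s)⁻¹) * (embNat I X ph)⁻¹
        = embNat I X rh * h * (embNat I X rh)⁻¹
      rw [conj_conj, ← embNat_mul]
      exact conj_eq_conj hh (fun m hm => fact1 m hm)
    have e2 : embFin I X N π * (embNat I X t * g * (embNat I X t)⁻¹) * (embFin I X N π)⁻¹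
        = g := by
      show embNat I X ph * (embNat I X t * g * (embNat I X t)⁻¹) * (embNat I X ph)⁻¹ = g
      rw [conj_conj, ← embNat_mul]
      exact conj_eq_of_fixed hg (fun m hm => fact2 m hm)
    rw [e1, e2]
  rw [← key, T_conj]

lemma embFin_eq {N : ℕ} (σ : Equiv.Perm (Fin N)) :
    embFin I X N σ = embNat I X (σ.extendDomain Fin.equivSubtype) := rfl

lemma embFin_mem {Ginf : Subgroup (Equiv.Perm (X ⊕ I × ℕ))}
    (hGS : ∀ τ : Equiv.Perm ℕ, {m : ℕ | τ m ≠ m}.Finite → embNat I X τ ∈ Ginf)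
    {N : ℕ} (σ : Equiv.Perm (Fin N)) : embFin I X N σ ∈ Ginf := by
  rw [embFin_eq]
  apply hGS
  apply Set.Finite.subset (Set.finite_Iio N)
  intro m hm
  by_contra hc
  exact hm (extend_ge σ (by simpa using hc))

lemma lam_empty_commute [IsEmpty X] {N n k : ℕ} (hk : k ≤ N) (hn : n ≤ N)
    {g h : Equiv.Perm (X ⊕ I × ℕ)}
    (hg : SuppS {x : ℕ | x < n} g) (hh : SuppS {x : ℕ | x < k} h)
    (ρ : Equiv.Perm (Fin N)) (hd : Lam hk hn ρ = ∅) :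
    g * (embFin I X N ρ * h * (embFin I X N ρ)⁻¹)
      = (embFin I X N ρ * h * (embFin I X N ρ)⁻¹) * g := by
  set rh := ρ.extendDomain (Fin.equivSubtype) with hrh
  have hhc : SuppS (rh '' {x : ℕ | x < k}) (embFin I X N ρ * h * (embFin I X N ρ)⁻¹) := by
    rw [embFin_eq]
    exact conj_suppS rh hh
  apply commute_of_disjoint hg hhc
  intro m hm hmem
  obtain ⟨y, hy, hval⟩ := hmem
  have hyk : y < k := hy
  have h2 : rh y = (ρ (Fin.castLE hk ⟨y, hyk⟩) : ℕ) := by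
    rw [hrh, extend_lt ρ (lt_of_lt_of_le hyk hk)]
    congr 1
  have hmn : m < n := hm
  have hpair : ((⟨y, hyk⟩ : Fin k), (⟨m, hmn⟩ : Fin n)) ∈ Lam hk hn ρ := by
    simp only [Lam, Finset.mem_filter, Finset.mem_univ, true_and]
    apply Fin.ext
    rw [Fin.coe_castLE, ← h2, hval]
  rw [hd] at hpair
  exact absurd hpair (Finset.notMem_empty _)

lemma d2_mem [IsEmpty X] {Ginf : Subgroup (Equiv.Perm (X ⊕ I × ℕ))}
    (hGS : ∀ τ : Equiv.Perm ℕ, {m : ℕ | τ m ≠ m}.Finite → embNat I X τ ∈ Ginf)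
    {N n k : ℕ} (hk : k ≤ N) (hn : n ≤ N)
    (ρ : Equiv.Perm (Fin N)) (hd : 2 ≤ (Lam hk hn ρ).card)
    (u : Equiv.Perm (X ⊕ I × ℕ))
    (hu1 : SuppS ({x : ℕ | x < n} ∪
      (ρ.extendDomain (Fin.equivSubtype : Fin N ≃ _)) '' {x : ℕ | x < k}) u)
    (hu2 : u ∈ Ginf) :
    T I X N u ∈ Submodule.span ℂ
      {x : MonoidAlgebra ℂ (Equiv.Perm (X ⊕ I × ℕ)) |
        ∃ m : ℕ, m + 2 ≤ n + k ∧ ∃ r ∈ Gset Ginf m, x = AN I X N m r} := by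
  classical
  set rh := ρ.extendDomain (Fin.equivSubtype : Fin N ≃ _) with hrh
  set U := ((Finset.univ.filter fun x : Fin N => (x : ℕ) < n) ∪
    Finset.univ.image (fun i : Fin k => ρ (Fin.castLE hk i))) with hU
  set m := U.card with hm
  have hmN : m ≤ N := by
    calc m ≤ (Finset.univ : Finset (Fin N)).card := Finset.card_le_univ U
    _ = N := by rw [Finset.card_univ, Fintype.card_fin]
  have hm2 : m + 2 ≤ n + k := by
    have := card_union_Lam hk hn ρ
    rw [← hU, ← hm] at this
    omega
  obtain ⟨π, hπ⟩ := exists_perm_comp (fun x : {x : Fin N // x ∈ U} => x.1)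
    (fun x => Fin.castLE hmN ((U.orderIsoOfFin rfl).symm x))
    (fun a b hab => Subtype.ext hab)
    (fun a b hab => by
      have := Fin.castLE_injective hmN hab
      exact (U.orderIsoOfFin rfl).symm.injective (by exact_mod_cast this))
  set ph := π.extendDomain (Fin.equivSubtype : Fin N ≃ _) with hph
  have hbound : ∀ (x : Fin N), x ∈ U → (π x : ℕ) < m := by
    intro x hx
    rw [show x = (⟨x, hx⟩ : {x : Fin N // x ∈ U}).1 from rfl, hπ ⟨x, hx⟩]
    simp only [Fin.coe_castLE]
    exact (((U.orderIsoOfFin rfl).symm ⟨x, hx⟩) : Fin m).2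
  set v := embFin I X N π * u * (embFin I X N π)⁻¹ with hv
  have hsubset : ph '' ({x : ℕ | x < n} ∪ rh '' {x : ℕ | x < k}) ⊆ {x : ℕ | x < m} := by
    rintro y ⟨x, hx, rfl⟩
    have hxU : ∃ hxN : x < N, (⟨x, hxN⟩ : Fin N) ∈ U := by
      rcases hx with hx | ⟨z, hz, hzval⟩
      · have hxN : x < N := lt_of_lt_of_le hx hn
        refine ⟨hxN, ?_⟩
        rw [hU]
        apply Finset.mem_union_left
        simp only [Finset.mem_filter, Finset.mem_univ, true_and]
        exact hx
      · have hzk : z < k := hz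
        have h2 : rh z = (ρ (Fin.castLE hk ⟨z, hzk⟩) : ℕ) := by
          rw [hrh, extend_lt ρ (lt_of_lt_of_le hzk hk)]
          congr 1
        have hxN : x < N := by rw [← hzval, h2]; exact (ρ (Fin.castLE hk ⟨z, hzk⟩)).2
        refine ⟨hxN, ?_⟩
        rw [hU]
        apply Finset.mem_union_right
        simp only [Finset.mem_image, Finset.mem_univ, true_and]
        refine ⟨⟨z, hzk⟩, ?_⟩
        apply Fin.ext
        rw [← h2, hzval]
      
    obtain ⟨hxN, hxU⟩ := hxU
    have : ph x = (π ⟨x, hxN⟩ : ℕ) := by rw [hph, extend_lt π hxN]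
    rw [Set.mem_setOf_eq, this]
    exact hbound _ hxU
  have hvsupp : SuppS {x : ℕ | x < m} v := by
    apply suppS_mono hsubset
    rw [hv, embFin_eq]
    exact conj_suppS _ hu1
  have hvmem : v ∈ Gset Ginf m := by
    constructor
    · exact Subgroup.mul_mem _ (Subgroup.mul_mem _ (embFin_mem (fun τ ht => hGS τ ht) π) hu2)
        (Subgroup.inv_mem _ (embFin_mem (fun τ ht => hGS τ ht) π))
    · intro i m' hm'
      exact hvsupp i m' (not_lt.2 hm')
  have hTuv : T I X N u = T I X N v := (T_conj π u).symm
  rw [hTuv, T_eq_smul_AN hmN v]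
  exact Submodule.smul_mem _ _
    (Submodule.subset_span ⟨m, hm2, v, hvmem, rfl⟩)
lemma lam_eq_singleton_iff {N n k : ℕ} (hk : k ≤ N) (hn : n ≤ N)
    (ρ : Equiv.Perm (Fin N)) (p : Fin k × Fin n) :
    Lam hk hn ρ = {p} ↔
      (ρ (Fin.castLE hk p.1) = Fin.castLE hn p.2 ∧
        ∀ i : Fin k, i ≠ p.1 → n ≤ (ρ (Fin.castLE hk i) : ℕ)) := by
  constructor
  · intro hL
    have hp : p ∈ Lam hk hn ρ := by rw [hL]; exact Finset.mem_singleton_self p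
    simp only [Lam, Finset.mem_filter, Finset.mem_univ, true_and] at hp
    refine ⟨hp, fun i hi => ?_⟩
    by_contra hc
    push_neg at hc
    have hq : (i, (⟨(ρ (Fin.castLE hk i) : ℕ), hc⟩ : Fin n)) ∈ Lam hk hn ρ := by
      simp only [Lam, Finset.mem_filter, Finset.mem_univ, true_and]
      exact Fin.ext rfl
    rw [hL, Finset.mem_singleton] at hq
    exact hi (congrArg Prod.fst hq)
  · rintro ⟨h1, h2⟩
    ext q
    simp only [Lam, Finset.mem_filter, Finset.mem_univ, true_and, Finset.mem_singleton]
    constructor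
    · intro hq
      have hq1 : q.1 = p.1 := by
        by_contra hc
        have := h2 q.1 hc
        rw [hq] at this
        simp only [Fin.coe_castLE] at this
        exact absurd this (not_le.2 q.2.2)
      have hq2 : q.2 = p.2 := by
        apply Fin.castLE_injective hn
        rw [← hq, hq1, h1]
      exact Prod.ext hq1 hq2
    · rintro rfl
      exact h1

lemma cp_card {N n k : ℕ} (hk : k ≤ N) (hn : n ≤ N) (p : Fin k × Fin n) :
    (Finset.univ.filter fun ρ : Equiv.Perm (Fin N) => Lam hk hn ρ = {p}).card
      = Nat.descFactorial (N - n) (k - 1) * Nat.factorial (N - k) := by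
  classical
  rw [show (Finset.univ.filter fun ρ : Equiv.Perm (Fin N) => Lam hk hn ρ = {p})
      = Finset.univ.filter fun ρ : Equiv.Perm (Fin N) =>
        ρ (Fin.castLE hk p.1) = Fin.castLE hn p.2 ∧
          ∀ i : Fin k, i ≠ p.1 → n ≤ (ρ (Fin.castLE hk i) : ℕ) by
    ext ρ
    simp only [Finset.mem_filter, Finset.mem_univ, true_and]
    exact lam_eq_singleton_iff hk hn ρ p]
  exact card_C hk hn p.1 p.2

lemma expand1 [IsEmpty X] {N n k : ℕ} (hn : n ≤ N) (hk : k ≤ N)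
    (g h : Equiv.Perm (X ⊕ I × ℕ)) :
    AN I X N n g * AN I X N k h
      = (((Nat.factorial (N - n) : ℂ))⁻¹ * ((Nat.factorial (N - k) : ℂ))⁻¹) •
        ∑ ρ : Equiv.Perm (Fin N),
          T I X N (g * (embFin I X N ρ * h * (embFin I X N ρ)⁻¹)) := by
  rw [AN_eq hn g, AN_eq hk h, smul_mul_assoc, mul_smul_comm, smul_smul]
  congr 1
  unfold T
  rw [Finset.sum_mul_sum]
  refine (Finset.sum_congr rfl fun σ _ => ?_).trans Finset.sum_comm
  apply Fintype.sum_equiv (Equiv.mulLeft σ).symm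
  intro τ
  rw [← map_mul]
  congr 1
  show embFin I X N σ * g * (embFin I X N σ)⁻¹ * (embFin I X N τ * h * (embFin I X N τ)⁻¹)
    = embFin I X N σ * (g * (embFin I X N (σ⁻¹ * τ) * h * (embFin I X N (σ⁻¹ * τ))⁻¹)) *
      (embFin I X N σ)⁻¹
  rw [embFin_mul, ← embFin_inv]
  group

lemma expand2 [IsEmpty X] {N n k : ℕ} (hn : n ≤ N) (hk : k ≤ N)
    (g h : Equiv.Perm (X ⊕ I × ℕ)) :
    AN I X N k h * AN I X N n g
      = (((Nat.factorial (N - n) : ℂ))⁻¹ * ((Nat.factorial (N - k) : ℂ))⁻¹) •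
        ∑ ρ : Equiv.Perm (Fin N),
          T I X N ((embFin I X N ρ * h * (embFin I X N ρ)⁻¹) * g) := by
  rw [AN_eq hk h, AN_eq hn g, smul_mul_assoc, mul_smul_comm, smul_smul, mul_comm]
  congr 1
  unfold T
  rw [Finset.sum_mul_sum]
  refine Finset.sum_comm.trans ?_
  refine (Finset.sum_congr rfl fun σ _ => ?_).trans Finset.sum_comm
  apply Fintype.sum_equiv (Equiv.mulLeft σ).symm
  intro τ
  rw [← map_mul]
  congr 1
  show embFin I X N τ * h * (embFin I X N τ)⁻¹ * (embFin I X N σ * g * (embFin I X N σ)⁻¹)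
    = embFin I X N σ * ((embFin I X N (σ⁻¹ * τ) * h * (embFin I X N (σ⁻¹ * τ))⁻¹) * g) *
      (embFin I X N σ)⁻¹
  rw [embFin_mul, ← embFin_inv]
  group

lemma perp [IsEmpty X] {N n k : ℕ} (hn : n ≤ N) (hk : k ≤ N)
    {g h : Equiv.Perm (X ⊕ I × ℕ)}
    (hg : SuppS {x : ℕ | x < n} g) (hh : SuppS {x : ℕ | x < k} h)
    (p : Fin k × Fin n) (s t s' t' : Equiv.Perm ℕ)
    (hs : ∀ j : Fin n, s (j : ℕ) < n + k - 1) (ht : ∀ i : Fin k, t (i : ℕ) < n + k - 1)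
    (hst : ∀ (i : Fin k) (j : Fin n), t (i : ℕ) = s (j : ℕ) ↔ i = p.1 ∧ j = p.2)
    (hs' : ∀ i : Fin k, s' (i : ℕ) < n + k - 1) (ht' : ∀ j : Fin n, t' (j : ℕ) < n + k - 1)
    (hst' : ∀ (j : Fin n) (i : Fin k), t' (j : ℕ) = s' (i : ℕ) ↔ j = p.2 ∧ i = p.1) :
    (((Nat.factorial (N - n) : ℂ))⁻¹ * ((Nat.factorial (N - k) : ℂ))⁻¹) •
      ∑ ρ ∈ Finset.univ.filter (fun ρ : Equiv.Perm (Fin N) => Lam hk hn ρ = {p}),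
        (T I X N (g * (embFin I X N ρ * h * (embFin I X N ρ)⁻¹))
          - T I X N ((embFin I X N ρ * h * (embFin I X N ρ)⁻¹) * g))
    = AN I X N (n + k - 1)
        ((embNat I X s * g * (embNat I X s)⁻¹) * (embNat I X t * h * (embNat I X t)⁻¹))
      - AN I X N (n + k - 1)
        ((embNat I X s' * h * (embNat I X s')⁻¹) * (embNat I X t' * g * (embNat I X t')⁻¹)) := by
  classical
  have hk1 : 0 < k := lt_of_le_of_lt (Nat.zero_le _) p.1.2
  have hn1 : 0 < n := lt_of_le_of_lt (Nat.zero_le _) p.2.2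
  by_cases hm1 : n + k - 1 ≤ N
  · have hsum : ∑ ρ ∈ Finset.univ.filter (fun ρ : Equiv.Perm (Fin N) => Lam hk hn ρ = {p}),
        (T I X N (g * (embFin I X N ρ * h * (embFin I X N ρ)⁻¹))
          - T I X N ((embFin I X N ρ * h * (embFin I X N ρ)⁻¹) * g))
        = (Finset.univ.filter (fun ρ : Equiv.Perm (Fin N) => Lam hk hn ρ = {p})).card •
          (T I X N ((embNat I X s * g * (embNat I X s)⁻¹) *
              (embNat I X t * h * (embNat I X t)⁻¹))
           - T I X N ((embNat I X s' * h * (embNat I X s')⁻¹) *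
              (embNat I X t' * g * (embNat I X t')⁻¹))) := by
      rw [Finset.sum_congr rfl (fun ρ hρ => ?_), Finset.sum_const]
      simp only [Finset.mem_filter, Finset.mem_univ, true_and] at hρ
      obtain ⟨h1, h2⟩ := (lam_eq_singleton_iff hk hn ρ p).1 hρ
      rw [real1 hk hn hm1 hg hh p.1 p.2 s t hs ht hst ρ h1 h2,
        real2 hk hn hm1 hg hh p.1 p.2 s' t' hs' ht' hst' ρ h1 h2]
    rw [hsum, cp_card hk hn p, AN_eq hm1, AN_eq hm1, ← smul_sub,
      ← Nat.cast_smul_eq_nsmul ℂ, smul_smul]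
    congr 1
    have hnat : (Nat.factorial (N - (n + k - 1))) * Nat.descFactorial (N - n) (k - 1)
        = Nat.factorial (N - n) := by
      have h2 : k - 1 ≤ N - n := by omega
      have h3 : N - n - (k - 1) = N - (n + k - 1) := by omega
      rw [← h3]
      exact Nat.factorial_mul_descFactorial h2
    have hne1 : ((Nat.factorial (N - n) : ℂ)) ≠ 0 := Nat.cast_ne_zero.2 (Nat.factorial_ne_zero _)
    have hne2 : ((Nat.factorial (N - k) : ℂ)) ≠ 0 := Nat.cast_ne_zero.2 (Nat.factorial_ne_zero _)
    have hne3 : ((Nat.factorial (N - (n + k - 1)) : ℂ)) ≠ 0 :=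
      Nat.cast_ne_zero.2 (Nat.factorial_ne_zero _)
    have hnatC : ((Nat.factorial (N - (n + k - 1)) : ℂ)) *
        ((Nat.descFactorial (N - n) (k - 1) : ℂ)) = ((Nat.factorial (N - n) : ℂ)) := by
      exact_mod_cast congrArg (Nat.cast : ℕ → ℂ) hnat
    push_cast
    field_simp
    linear_combination hnatC
  · have hCp : Finset.univ.filter (fun ρ : Equiv.Perm (Fin N) => Lam hk hn ρ = {p}) = ∅ := by
      rw [Finset.filter_eq_empty_iff]
      intro ρ _
      intro hL
      have hcard := card_union_Lam hk hn ρ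
      rw [hL, Finset.card_singleton] at hcard
      have hle : ((Finset.univ.filter fun x : Fin N => (x : ℕ) < n) ∪
          Finset.univ.image (fun i : Fin k => ρ (Fin.castLE hk i))).card ≤ N := by
        calc _ ≤ (Finset.univ : Finset (Fin N)).card := Finset.card_le_univ _
        _ = N := by rw [Finset.card_univ, Fintype.card_fin]
      omega
    rw [hCp, Finset.sum_empty, smul_zero, AN, if_neg hm1, AN, if_neg hm1, sub_self]

end CAN

open CAN in
/-- Suppose `X = ∅`.  For `g ∈ G_n`, `h ∈ G_k` and every `N`, the commutator
`A_N[n,g] * A_N[k,h] − A_N[k,h] * A_N[n,g]` differs from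
`Σ_λ ( A_N[n+k−1, g ⊛_λ h] − A_N[n+k−1, h ⊛_{λ⁻¹} g] )` — the sum over all rank-one
partial bijections `λ` from `{0,…,k−1}` to `{0,…,n−1}`, i.e. over all pairs `(α,β)` with
`α ∈ {0,…,k−1}`, `β ∈ {0,…,n−1}` — by an element of the complex linear span of the
elements `A_N[m,r]` with `m ≤ n + k − 2` (i.e. `m + 2 ≤ n + k`) and `r ∈ G_m`.
Here `g ⊛_λ h = (s g s⁻¹)(t h t⁻¹)` and `h ⊛_{λ⁻¹} g = (s' h s'⁻¹)(t' g t'⁻¹)` are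
computed from arbitrary realizations `(s,t) = w₁(α,β)` and `(s',t') = w₂(α,β)` of `λ` and
of the inverse partial bijection `λ⁻¹`. -/
theorem commutator_AN_top_term
    {I X : Type*} [Finite I] [IsEmpty X]
    (Ginf : Subgroup (Equiv.Perm (X ⊕ I × ℕ)))
    (hGfs : ∀ g ∈ Ginf, {v : X ⊕ I × ℕ | g v ≠ v}.Finite)
    (hGS : ∀ τ : Equiv.Perm ℕ, {m : ℕ | τ m ≠ m}.Finite → embNat I X τ ∈ Ginf)
    (n k : ℕ) (g h : Equiv.Perm (X ⊕ I × ℕ))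
    (hg : g ∈ Gset Ginf n) (hh : h ∈ Gset Ginf k) (N : ℕ)
    (w₁ w₂ : Fin k × Fin n → Equiv.Perm ℕ × Equiv.Perm ℕ)
    (hw₁ : ∀ p : Fin k × Fin n,
      fixesFrom (n + k - 1) (w₁ p).1 ∧ fixesFrom (n + k - 1) (w₁ p).2 ∧
      (∀ j : Fin n, (w₁ p).1 (j : ℕ) < n + k - 1) ∧
      (∀ i : Fin k, (w₁ p).2 (i : ℕ) < n + k - 1) ∧
      (∀ (i : Fin k) (j : Fin n),
        (w₁ p).2 (i : ℕ) = (w₁ p).1 (j : ℕ) ↔ i = p.1 ∧ j = p.2))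
    (hw₂ : ∀ p : Fin k × Fin n,
      fixesFrom (n + k - 1) (w₂ p).1 ∧ fixesFrom (n + k - 1) (w₂ p).2 ∧
      (∀ i : Fin k, (w₂ p).1 (i : ℕ) < n + k - 1) ∧
      (∀ j : Fin n, (w₂ p).2 (j : ℕ) < n + k - 1) ∧
      (∀ (j : Fin n) (i : Fin k),
        (w₂ p).2 (j : ℕ) = (w₂ p).1 (i : ℕ) ↔ j = p.2 ∧ i = p.1)) :
    (AN I X N n g * AN I X N k h - AN I X N k h * AN I X N n g)
        - ∑ p : Fin k × Fin n,
            (AN I X N (n + k - 1)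
                ((embNat I X (w₁ p).1 * g * (embNat I X (w₁ p).1)⁻¹) *
                  (embNat I X (w₁ p).2 * h * (embNat I X (w₁ p).2)⁻¹))
              - AN I X N (n + k - 1)
                  ((embNat I X (w₂ p).1 * h * (embNat I X (w₂ p).1)⁻¹) *
                    (embNat I X (w₂ p).2 * g * (embNat I X (w₂ p).2)⁻¹)))
      ∈ Submodule.span ℂ
          {x : MonoidAlgebra ℂ (Equiv.Perm (X ⊕ I × ℕ)) |
            ∃ m : ℕ, m + 2 ≤ n + k ∧ ∃ r ∈ Gset Ginf m, x = AN I X N m r} := by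
  classical
  by_cases hmain : n ≤ N ∧ k ≤ N
  case neg =>
    have hzero : AN I X N n g * AN I X N k h - AN I X N k h * AN I X N n g = 0 := by
      rcases not_and_or.mp hmain with hc | hc
      · have h0 : AN I X N n g = 0 := by rw [AN, if_neg hc]
        rw [h0, zero_mul, mul_zero, sub_zero]
      · have h0 : AN I X N k h = 0 := by rw [AN, if_neg hc]
        rw [h0, zero_mul, mul_zero, sub_zero]
    have hterm : ∀ p : Fin k × Fin n,
        (AN I X N (n + k - 1)
            ((embNat I X (w₁ p).1 * g * (embNat I X (w₁ p).1)⁻¹) *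
              (embNat I X (w₁ p).2 * h * (embNat I X (w₁ p).2)⁻¹))
          - AN I X N (n + k - 1)
              ((embNat I X (w₂ p).1 * h * (embNat I X (w₂ p).1)⁻¹) *
                (embNat I X (w₂ p).2 * g * (embNat I X (w₂ p).2)⁻¹))) = 0 := by
      intro p
      have hk1 : 0 < k := lt_of_le_of_lt (Nat.zero_le _) p.1.2
      have hn1 : 0 < n := lt_of_le_of_lt (Nat.zero_le _) p.2.2
      have hnk : ¬ (n + k - 1 ≤ N) := by
        rcases not_and_or.mp hmain with hc | hc <;> omega
      rw [AN, if_neg hnk, AN, if_neg hnk, sub_self]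
    rw [hzero, Finset.sum_congr rfl (fun p _ => hterm p), Finset.sum_const, smul_zero,
      sub_zero]
    exact Submodule.zero_mem _
  case pos =>
    obtain ⟨hn, hk⟩ := hmain
    set c : ℂ := ((Nat.factorial (N - n) : ℂ))⁻¹ * ((Nat.factorial (N - k) : ℂ))⁻¹ with hc
    set FT : Equiv.Perm (Fin N) → MonoidAlgebra ℂ (Equiv.Perm (X ⊕ I × ℕ)) :=
      fun ρ => T I X N (g * (embFin I X N ρ * h * (embFin I X N ρ)⁻¹)) with hFT
    set GT : Equiv.Perm (Fin N) → MonoidAlgebra ℂ (Equiv.Perm (X ⊕ I × ℕ)) :=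
      fun ρ => T I X N ((embFin I X N ρ * h * (embFin I X N ρ)⁻¹) * g) with hGT
    have hgS : SuppS {x : ℕ | x < n} g := gset_suppS hg
    have hhS : SuppS {x : ℕ | x < k} h := gset_suppS hh
    have hcomm : AN I X N n g * AN I X N k h - AN I X N k h * AN I X N n g
        = c • ∑ ρ : Equiv.Perm (Fin N), (FT ρ - GT ρ) := by
      rw [expand1 hn hk g h, expand2 hn hk g h, ← smul_sub, ← Finset.sum_sub_distrib]
    -- split the sum into rank 1 and rank ≥ 2 parts
    have hsplit : ∑ ρ : Equiv.Perm (Fin N), (FT ρ - GT ρ)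
        = (∑ ρ ∈ Finset.univ.filter (fun ρ : Equiv.Perm (Fin N) => (Lam hk hn ρ).card = 1),
            (FT ρ - GT ρ))
          + ∑ ρ ∈ Finset.univ.filter (fun ρ : Equiv.Perm (Fin N) => 2 ≤ (Lam hk hn ρ).card),
            (FT ρ - GT ρ) := by
      rw [← Finset.sum_filter_add_sum_filter_not Finset.univ
        (fun ρ : Equiv.Perm (Fin N) => (Lam hk hn ρ).card ≤ 1) (fun ρ => FT ρ - GT ρ)]
      congr 1
      · rw [← Finset.sum_filter_add_sum_filter_not
          (Finset.univ.filter (fun ρ : Equiv.Perm (Fin N) => (Lam hk hn ρ).card ≤ 1))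
          (fun ρ => (Lam hk hn ρ).card = 1), Finset.filter_filter, Finset.filter_filter]
        have e1 : (Finset.univ.filter (fun ρ : Equiv.Perm (Fin N) =>
            (Lam hk hn ρ).card ≤ 1 ∧ (Lam hk hn ρ).card = 1))
            = Finset.univ.filter (fun ρ : Equiv.Perm (Fin N) => (Lam hk hn ρ).card = 1) := by
          ext ρ
          simp only [Finset.mem_filter, Finset.mem_univ, true_and]
          omega
        have e2 : ∑ ρ ∈ Finset.univ.filter (fun ρ : Equiv.Perm (Fin N) =>
            (Lam hk hn ρ).card ≤ 1 ∧ ¬ (Lam hk hn ρ).card = 1), (FT ρ - GT ρ) = 0 := by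
          apply Finset.sum_eq_zero
          intro ρ hρ
          simp only [Finset.mem_filter, Finset.mem_univ, true_and] at hρ
          have hL0 : Lam hk hn ρ = ∅ := Finset.card_eq_zero.1 (by omega)
          rw [hFT, hGT]
          simp only []
          rw [lam_empty_commute hk hn hgS hhS ρ hL0, sub_self]
        rw [e1, e2, add_zero]
      · congr 1
        ext ρ
        simp only [Finset.mem_filter, Finset.mem_univ, true_and]
        omega
    -- the rank 1 part equals the sum of the top terms
    have hbi : Finset.univ.filter (fun ρ : Equiv.Perm (Fin N) => (Lam hk hn ρ).card = 1)
        = Finset.univ.biUnion (fun p : Fin k × Fin n =>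
            Finset.univ.filter (fun ρ : Equiv.Perm (Fin N) => Lam hk hn ρ = {p})) := by
      ext ρ
      simp only [Finset.mem_filter, Finset.mem_univ, true_and, Finset.mem_biUnion,
        Finset.card_eq_one]
    have hdisj : ∀ p ∈ (Finset.univ : Finset (Fin k × Fin n)), ∀ q ∈ Finset.univ, p ≠ q →
        Disjoint (Finset.univ.filter (fun ρ : Equiv.Perm (Fin N) => Lam hk hn ρ = {p}))
          (Finset.univ.filter (fun ρ : Equiv.Perm (Fin N) => Lam hk hn ρ = {q})) := by
      intro p _ q _ hpq
      rw [Finset.disjoint_left]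
      intro ρ h1 h2
      simp only [Finset.mem_filter, Finset.mem_univ, true_and] at h1 h2
      exact hpq (Finset.singleton_injective (h1.symm.trans h2))
    have hrank1 : c • ∑ ρ ∈ Finset.univ.filter
          (fun ρ : Equiv.Perm (Fin N) => (Lam hk hn ρ).card = 1), (FT ρ - GT ρ)
        = ∑ p : Fin k × Fin n,
            (AN I X N (n + k - 1)
                ((embNat I X (w₁ p).1 * g * (embNat I X (w₁ p).1)⁻¹) *
                  (embNat I X (w₁ p).2 * h * (embNat I X (w₁ p).2)⁻¹))
              - AN I X N (n + k - 1)
                  ((embNat I X (w₂ p).1 * h * (embNat I X (w₂ p).1)⁻¹) *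
                    (embNat I X (w₂ p).2 * g * (embNat I X (w₂ p).2)⁻¹))) := by
      rw [hbi, Finset.sum_biUnion hdisj, Finset.smul_sum]
      apply Finset.sum_congr rfl
      intro p _
      exact perp hn hk hgS hhS p (w₁ p).1 (w₁ p).2 (w₂ p).1 (w₂ p).2
        (hw₁ p).2.2.1 (hw₁ p).2.2.2.1 (hw₁ p).2.2.2.2
        (hw₂ p).2.2.1 (hw₂ p).2.2.2.1 (hw₂ p).2.2.2.2
    -- assemble
    rw [hcomm, hsplit, smul_add, hrank1, add_sub_cancel_left]
    -- the rank ≥ 2 part lies in the span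
    apply Submodule.smul_mem
    apply Submodule.sum_mem
    intro ρ hρ
    simp only [Finset.mem_filter, Finset.mem_univ, true_and] at hρ
    have hconj : SuppS ((ρ.extendDomain (Fin.equivSubtype : Fin N ≃ _)) '' {x : ℕ | x < k})
        (embFin I X N ρ * h * (embFin I X N ρ)⁻¹) := by
      rw [embFin_eq]
      exact conj_suppS _ hhS
    have hmemconj : embFin I X N ρ * h * (embFin I X N ρ)⁻¹ ∈ Ginf :=
      Subgroup.mul_mem _ (Subgroup.mul_mem _ (embFin_mem hGS ρ) hh.1)
        (Subgroup.inv_mem _ (embFin_mem hGS ρ))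
    apply Submodule.sub_mem
    · exact d2_mem hGS hk hn ρ hρ _ (suppS_mul hgS hconj) (Subgroup.mul_mem _ hg.1 hmemconj)
    · refine d2_mem hGS hk hn ρ hρ _ ?_ (Subgroup.mul_mem _ hmemconj hg.1)
      exact suppS_mono (Set.union_subset Set.subset_union_right Set.subset_union_left)
        (suppS_mul hconj hgS)
end
end
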